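/- arXiv:1604.03655 — 4 statements merged into one kernel-verified Lean document; each statement's English description precedes it below -/
import Mathlib

section
/- For every n ≥ 1 and every family of nonatomic Borel probability measures μ_1, …, μ_n on [0,1], there exists a family of pairwise disjoint measurable subsets X_1, …, X_n of [0,1] (a partial allocation, not necessarily covering all of [0,1]) such that μ_i(X_i) ≥ 1/n for every agent i (proportionality with respect to the whole cake) and μ_i(X_i) ≥ μ_i(X_j) for all i, j (envy-freeness). -/
open MeasureTheory Set Filter Topology
open scoped ENNReal

section Sierpinski
variable (μ : Measure ℝ) [IsFiniteMeasure μ]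

lemma cdf_mono (A : Set ℝ) :
    Monotone (fun t : ℝ => (μ (A ∩ Iic t)).toReal) := fun _ _ huv =>
  ENNReal.toReal_mono (measure_ne_top μ _)
    (measure_mono (inter_subset_inter_right _ (Iic_subset_Iic.2 huv)))

lemma cdf_diff_le (A : Set ℝ) {u v : ℝ} (huv : u ≤ v) :
    (μ (A ∩ Iic v)).toReal - (μ (A ∩ Iic u)).toReal ≤ (μ (Ioc u v)).toReal := by
  have hsub : A ∩ Iic v ⊆ (A ∩ Iic u) ∪ Ioc u v := by
    intro x ⟨hxA, hxv⟩
    rcases le_or_gt x u with h | h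
    · exact Or.inl ⟨hxA, h⟩
    · exact Or.inr ⟨h, hxv⟩
  have hle := (measure_mono hsub).trans (measure_union_le (μ := μ) (A ∩ Iic u) (Ioc u v))
  have h2 := ENNReal.toReal_mono
    (ENNReal.add_ne_top.2 ⟨measure_ne_top μ _, measure_ne_top μ _⟩) hle
  rw [ENNReal.toReal_add (measure_ne_top μ _) (measure_ne_top μ _)] at h2
  linarith

lemma cdf_cont [NullSingletonClass μ] (A : Set ℝ) :
    Continuous (fun t : ℝ => (μ (A ∩ Iic t)).toReal) := by
  rw [Metric.continuous_iff]
  intro t ε hε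
  have h1 : Tendsto (fun k : ℕ => μ (Ioc (t - 1/(k+1)) (t + 1/(k+1)))) atTop (𝓝 (μ {t})) := by
    have hInt : ⋂ k : ℕ, Ioc (t - 1/(k+1)) (t + 1/(k+1)) = {t} := by
      ext x
      simp only [mem_iInter, mem_Ioc, mem_singleton_iff]
      constructor
      · intro h
        have hle : x ≤ t := by
          have h' : ∀ k : ℕ, x ≤ t + 1/(k+1) := fun k => (h k).2
          have := ge_of_tendsto (tendsto_const_nhds.add
            (tendsto_one_div_add_atTop_nhds_zero_nat)) (Eventually.of_forall h')
          simpa using this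
        have hge : t ≤ x := by
          have h' : ∀ k : ℕ, t - 1/(k+1) ≤ x := fun k => (h k).1.le
          have := le_of_tendsto (tendsto_const_nhds.sub
            (tendsto_one_div_add_atTop_nhds_zero_nat)) (Eventually.of_forall h')
          simpa using this
        linarith
      · rintro rfl k
        have hpos : (0:ℝ) < 1/(k+1) := by positivity
        exact ⟨by linarith, by linarith⟩
    rw [← hInt]
    apply tendsto_measure_iInter_atTop (fun k => measurableSet_Ioc.nullMeasurableSet)
    · intro a b hab
      have hc : ((a:ℝ)+1) ≤ ((b:ℝ)+1) := by
        have : (a:ℝ) ≤ b := Nat.cast_le.2 hab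
        linarith
      have : 1/((b:ℝ)+1) ≤ 1/((a:ℝ)+1) := one_div_le_one_div_of_le (by positivity) hc
      exact Ioc_subset_Ioc (by linarith) (by linarith)
    · exact ⟨0, measure_ne_top μ _⟩
  rw [measure_singleton] at h1
  have h2 : Tendsto (fun k : ℕ => (μ (Ioc (t - 1/(k+1)) (t + 1/(k+1)))).toReal) atTop (𝓝 0) := by
    have := (ENNReal.tendsto_toReal (a := 0) (by simp)).comp h1
    simpa [Function.comp_def] using this
  obtain ⟨k, hk⟩ := (h2.eventually (eventually_lt_nhds hε)).exists
  refine ⟨1/(k+1), by positivity, fun s hs => ?_⟩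
  have h1d : 1/((k:ℝ)+1) = ((k:ℝ)+1)⁻¹ := one_div _
  have habs := abs_lt.1 (by simpa [Real.dist_eq] using hs)
  have hb1 : t - 1/(k+1) ≤ s := by rw [h1d]; linarith [habs.1]
  have hb2 : s ≤ t + 1/(k+1) := by rw [h1d]; linarith [habs.2]
  have hpos : (0:ℝ) < 1/((k:ℝ)+1) := by positivity
  have hm := cdf_mono μ A
  have l1 := hm hb1
  have l2 := hm hb2
  have l3 := hm (show t - 1/((k:ℝ)+1) ≤ t by linarith)
  have l4 := hm (show t ≤ t + 1/((k:ℝ)+1) by linarith)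
  have hd := cdf_diff_le μ A (show t - 1/((k:ℝ)+1) ≤ t + 1/((k:ℝ)+1) by linarith)
  rw [Real.dist_eq, abs_lt]
  constructor <;> simp only at l1 l2 l3 l4 hd ⊢ <;> linarith

/-- Sierpiński: halving a measurable set for a single nonatomic finite measure on ℝ. -/
lemma sierpinski_half [NullSingletonClass μ] (A : Set ℝ) (hA : MeasurableSet A) :
    ∃ B, B ⊆ A ∧ MeasurableSet B ∧ μ B = μ A / 2 := by
  rcases eq_or_ne (μ A) 0 with h0 | h0
  · exact ⟨∅, empty_subset A, MeasurableSet.empty, by simp [h0]⟩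
  set f : ℝ → ℝ := fun t => (μ (A ∩ Iic t)).toReal with hf
  set c : ℝ := (μ A).toReal / 2 with hc
  have hApos : 0 < (μ A).toReal := ENNReal.toReal_pos h0 (measure_ne_top μ A)
  have hcpos : 0 < c := by positivity
  have hup : Tendsto (fun k : ℕ => f k) atTop (𝓝 (μ A).toReal) := by
    have h : Tendsto (fun k : ℕ => μ (A ∩ Iic (k:ℝ))) atTop (𝓝 (μ (⋃ k : ℕ, A ∩ Iic (k:ℝ)))) := by
      apply tendsto_measure_iUnion_atTop
      intro a b hab
      exact inter_subset_inter_right _ (Iic_subset_Iic.2 (Nat.cast_le.2 hab))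
    have hU : (⋃ k : ℕ, A ∩ Iic (k:ℝ)) = A := by
      rw [← inter_iUnion]
      have h2 : (⋃ k : ℕ, Iic (k:ℝ)) = univ := by
        ext x
        simp only [mem_iUnion, mem_Iic, mem_univ, iff_true]
        exact exists_nat_ge x
      rw [h2, inter_univ]
    rw [hU] at h
    exact (ENNReal.tendsto_toReal (measure_ne_top μ A)).comp h
  have hcb : ∃ b : ℕ, c ≤ f b := by
    have hlt : c < (μ A).toReal := by rw [hc]; linarith
    obtain ⟨b, hb⟩ := (hup.eventually (eventually_gt_nhds hlt)).exists
    exact ⟨b, hb.le⟩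
  obtain ⟨b, hb⟩ := hcb
  have hdown : Tendsto (fun k : ℕ => f (-(k:ℝ))) atTop (𝓝 0) := by
    have h : Tendsto (fun k : ℕ => μ (A ∩ Iic (-(k:ℝ)))) atTop
        (𝓝 (μ (⋂ k : ℕ, A ∩ Iic (-(k:ℝ))))) := by
      apply tendsto_measure_iInter_atTop
        (fun k => (hA.inter measurableSet_Iic).nullMeasurableSet)
      · intro a b hab
        refine inter_subset_inter_right _ (Iic_subset_Iic.2 ?_)
        have : (a:ℝ) ≤ b := Nat.cast_le.2 hab
        linarith
      · exact ⟨0, measure_ne_top μ _⟩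
    have hI : (⋂ k : ℕ, A ∩ Iic (-(k:ℝ))) = ∅ := by
      rw [eq_empty_iff_forall_notMem]
      intro x hx
      simp only [mem_iInter, mem_inter_iff, mem_Iic] at hx
      obtain ⟨k, hk⟩ := exists_nat_gt (-x)
      have := (hx k).2
      linarith
    rw [hI, measure_empty] at h
    simpa [Function.comp_def, hf] using (ENNReal.tendsto_toReal (a := 0) (by simp)).comp h
  obtain ⟨a, ha⟩ := (hdown.eventually (eventually_lt_nhds hcpos)).exists
  have hale : -(a:ℝ) ≤ b := by
    by_contra h
    push_neg at h
    have := cdf_mono μ A h.le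
    simp only [hf] at ha hb this
    linarith
  obtain ⟨t₀, _, ht₀⟩ := intermediate_value_Icc hale (cdf_cont μ A).continuousOn ⟨ha.le, hb⟩
  refine ⟨A ∩ Iic t₀, inter_subset_left, hA.inter measurableSet_Iic, ?_⟩
  have ht₀' : (μ (A ∩ Iic t₀)).toReal = c := ht₀
  have h1 : (μ (A ∩ Iic t₀)).toReal = (μ A / 2).toReal := by
    rw [ht₀', hc, ENNReal.toReal_div]
    norm_num
  exact (ENNReal.toReal_eq_toReal_iff' (measure_ne_top μ _)
    (lt_of_le_of_lt ENNReal.half_le_self (measure_lt_top μ A)).ne).1 h1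

end Sierpinski

section Dyadic

noncomputable def dlevel (half : Set ℝ → Set ℝ) (A : Set ℝ) : ℕ → ℕ → Set ℝ
  | 0, j => if j = 0 then A else ∅
  | k+1, j =>
    if j % 2 = 0 then half (dlevel half A k (j / 2))
    else dlevel half A k (j / 2) \ half (dlevel half A k (j / 2))

variable {half : Set ℝ → Set ℝ} {A : Set ℝ}

lemma dlevel_zero (j : ℕ) : dlevel half A 0 j = if j = 0 then A else ∅ := rfl

lemma dlevel_succ_even {j : ℕ} (h : j % 2 = 0) (k : ℕ) :
    dlevel half A (k+1) j = half (dlevel half A k (j / 2)) := by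
  simp [dlevel, h]

lemma dlevel_succ_odd {j : ℕ} (h : j % 2 = 1) (k : ℕ) :
    dlevel half A (k+1) j
      = dlevel half A k (j / 2) \ half (dlevel half A k (j / 2)) := by
  simp [dlevel, h]

lemma dlevel_succ_subset (hsub : ∀ B, half B ⊆ B) (k j : ℕ) :
    dlevel half A (k+1) j ⊆ dlevel half A k (j / 2) := by
  rcases Nat.mod_two_eq_zero_or_one j with h | h
  · rw [dlevel_succ_even h]; exact hsub _
  · rw [dlevel_succ_odd h]; exact diff_subset

lemma dlevel_subset (hsub : ∀ B, half B ⊆ B) : ∀ k j, dlevel half A k j ⊆ A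
  | 0, j => by
    rw [dlevel_zero]
    by_cases h : j = 0 <;> simp [h]
  | k+1, j => (dlevel_succ_subset hsub k j).trans (dlevel_subset hsub k (j/2))

lemma dlevel_meas (hmeas : ∀ B, MeasurableSet B → MeasurableSet (half B))
    (hA : MeasurableSet A) : ∀ k j, MeasurableSet (dlevel half A k j)
  | 0, j => by
    rw [dlevel_zero]
    by_cases h : j = 0 <;> simp [h, hA]
  | k+1, j => by
    rcases Nat.mod_two_eq_zero_or_one j with h | h
    · rw [dlevel_succ_even h]
      exact hmeas _ (dlevel_meas hmeas hA k (j/2))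
    · rw [dlevel_succ_odd h]
      exact (dlevel_meas hmeas hA k (j/2)).diff (hmeas _ (dlevel_meas hmeas hA k (j/2)))

lemma dlevel_parent (hsub : ∀ B, half B ⊆ B) (k j : ℕ) :
    dlevel half A (k+1) (2*j) ∪ dlevel half A (k+1) (2*j+1) = dlevel half A k j := by
  rw [dlevel_succ_even (by omega), dlevel_succ_odd (by omega),
    show (2*j)/2 = j by omega, show (2*j+1)/2 = j by omega]
  exact union_diff_cancel (hsub _)

lemma dlevel_disjoint (hsub : ∀ B, half B ⊆ B) :
    ∀ k, ∀ j j', j ≠ j' → Disjoint (dlevel half A k j) (dlevel half A k j')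
  | 0, j, j', hne => by
    rcases eq_or_ne j 0 with rfl | hj
    · rw [dlevel_zero j', if_neg hne.symm]; exact disjoint_empty _
    · rw [dlevel_zero j, if_neg hj]; exact empty_disjoint _
  | k+1, j, j', hne => by
    rcases eq_or_ne (j/2) (j'/2) with heq | hne2
    · have hpar : (j % 2 = 0 ∧ j' % 2 = 1) ∨ (j % 2 = 1 ∧ j' % 2 = 0) := by omega
      rcases hpar with ⟨h1, h2⟩ | ⟨h1, h2⟩
      · rw [dlevel_succ_even h1, dlevel_succ_odd h2, ← heq]
        exact disjoint_sdiff_self_right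
      · rw [dlevel_succ_odd h1, dlevel_succ_even h2, heq]
        exact disjoint_sdiff_self_left
    · exact (dlevel_disjoint hsub k (j/2) (j'/2) hne2).mono
        (dlevel_succ_subset hsub k j) (dlevel_succ_subset hsub k j')

lemma ennreal_div_succ_pow (x : ℝ≥0∞) (k : ℕ) : x / 2^k / 2 = x / 2^(k+1) := by
  rw [div_eq_mul_inv, div_eq_mul_inv, div_eq_mul_inv, pow_succ,
    ENNReal.mul_inv (Or.inl (by positivity)) (Or.inl (ENNReal.pow_ne_top (by norm_num))),
    mul_assoc]

lemma dlevel_val {ι : Type*} (μ : ι → Measure ℝ) [∀ i, IsFiniteMeasure (μ i)]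
    (hsub : ∀ B, half B ⊆ B)
    (hmeas : ∀ B, MeasurableSet B → MeasurableSet (half B))
    (hval : ∀ B, MeasurableSet B → ∀ i, μ i (half B) = μ i B / 2)
    (hA : MeasurableSet A) :
    ∀ k j, j < 2^k → ∀ i, μ i (dlevel half A k j) = μ i A / 2^k
  | 0, j, hj, i => by
    interval_cases j
    simp [dlevel_zero]
  | k+1, j, hj, i => by
    have hj2 : j / 2 < 2^k := by
      have : 2^(k+1) = 2^k * 2 := by ring
      omega
    have hpar := dlevel_val μ hsub hmeas hval hA k (j/2) hj2 i
    have hparm := dlevel_meas hmeas hA k (j/2) (half := half)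
    rcases Nat.mod_two_eq_zero_or_one j with h | h
    · rw [dlevel_succ_even h, hval _ hparm i, hpar, ennreal_div_succ_pow]
    · rw [dlevel_succ_odd h,
        measure_diff (hsub _) (hmeas _ hparm).nullMeasurableSet (measure_ne_top _ _),
        hval _ hparm i, hpar, ENNReal.sub_half
          (ENNReal.div_lt_top (measure_ne_top _ _) (by positivity)).ne,
        ennreal_div_succ_pow]

end Dyadic

section Filtration

/-- From a halving procedure for a family of finite measures, construct a "filtration":
a monotone family of subsets of `A` realizing every fraction of every measure. -/
lemma filtration_exists {ι : Type*} (μ : ι → Measure ℝ) [∀ i, IsFiniteMeasure (μ i)]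
    (H : ∀ A : Set ℝ, MeasurableSet A →
      ∃ B, B ⊆ A ∧ MeasurableSet B ∧ ∀ i, μ i B = μ i A / 2)
    (A : Set ℝ) (hA : MeasurableSet A) :
    ∃ F : ℝ → Set ℝ, Monotone F ∧ (∀ t, MeasurableSet (F t)) ∧ (∀ t, F t ⊆ A) ∧
      ∀ i t, μ i (F t) = ENNReal.ofReal (max 0 (min t 1)) * μ i A := by
  classical
  set half : Set ℝ → Set ℝ :=
    fun B => if h : MeasurableSet B then (H B h).choose else ∅ with hhalf
  have hsub : ∀ B, half B ⊆ B := by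
    intro B
    by_cases h : MeasurableSet B
    · simp only [hhalf, dif_pos h]
      exact (H B h).choose_spec.1
    · simp only [hhalf, dif_neg h]
      exact empty_subset B
  have hmeas : ∀ B, MeasurableSet B → MeasurableSet (half B) := by
    intro B h
    simp only [hhalf, dif_pos h]
    exact (H B h).choose_spec.2.1
  have hval : ∀ B, MeasurableSet B → ∀ i, μ i (half B) = μ i B / 2 := by
    intro B h i
    simp only [hhalf, dif_pos h]
    exact (H B h).choose_spec.2.2 i
  -- prefix unions
  set P : ℕ → ℕ → Set ℝ := fun k m => ⋃ j ∈ Finset.range m, dlevel half A k j with hP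
  have Pmeas : ∀ k m, MeasurableSet (P k m) := fun k m =>
    (Finset.range m).measurableSet_biUnion (fun j _ => dlevel_meas hmeas hA k j)
  have PsubA : ∀ k m, P k m ⊆ A := by
    intro k m
    apply iUnion₂_subset
    intro j _
    exact dlevel_subset hsub k j
  have Pmono : ∀ k m m', m ≤ m' → P k m ⊆ P k m' := by
    intro k m m' h
    exact biUnion_subset_biUnion_left (Finset.range_subset_range.2 h)
  have Pval : ∀ k m, m ≤ 2^k → ∀ i, μ i (P k m) = m * (μ i A / 2^k) := by
    intro k m hm i
    simp only [hP]
    rw [measure_biUnion_finset ?hd (fun j _ => dlevel_meas hmeas hA k j)]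
    case hd =>
      intro a _ b _ hab
      exact dlevel_disjoint hsub k a b hab
    rw [Finset.sum_congr rfl (fun j hj => dlevel_val μ hsub hmeas hval hA k j
      (lt_of_lt_of_le (Finset.mem_range.1 hj) hm) i)]
    simp [Finset.sum_const]
  have Pstep : ∀ k m, P (k+1) (2*m) = P k m := by
    intro k m
    induction m with
    | zero => simp [hP]
    | succ m ih =>
      have h1 : 2*(m+1) = (2*m+1)+1 := by ring
      simp only [hP] at ih ⊢
      rw [h1, Finset.range_add_one, Finset.range_add_one (n := 2*m), Finset.range_add_one (n := m)]
      simp only [Finset.set_biUnion_insert]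
      rw [← union_assoc, union_comm (dlevel half A (k+1) (2*m+1)) (dlevel half A (k+1) (2*m)),
        union_assoc, ih, ← union_assoc, dlevel_parent hsub k m]
  -- the filtration
  set c : ℝ → ℝ := fun t => max 0 (min t 1) with hc
  have hc0 : ∀ t, 0 ≤ c t := fun t => le_max_left _ _
  have hc1 : ∀ t, c t ≤ 1 := fun t => max_le (by norm_num) (min_le_right _ _)
  set mk : ℝ → ℕ → ℕ := fun t k => ⌊c t * 2^k⌋₊ with hmk
  have hmk_le : ∀ t k, mk t k ≤ 2^k := by
    intro t k
    simp only [hmk]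
    have h : c t * 2^k ≤ ((2^k : ℕ) : ℝ) := by
      push_cast
      nlinarith [hc1 t, pow_pos (show (0:ℝ) < 2 by norm_num) k]
    exact le_trans (Nat.floor_le_floor h) (le_of_eq (Nat.floor_natCast _))
  have hmk_chain : ∀ t k, 2 * mk t k ≤ mk t (k+1) := by
    intro t k
    simp only [hmk]
    apply Nat.le_floor
    have h1 : (⌊c t * 2^k⌋₊ : ℝ) ≤ c t * 2^k := Nat.floor_le (by positivity)
    push_cast
    rw [pow_succ]
    linarith
  set F : ℝ → Set ℝ := fun t => ⋃ k, P k (mk t k) with hF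
  have Fchain : ∀ t, Monotone (fun k => P k (mk t k)) := by
    intro t
    apply monotone_nat_of_le_succ
    intro k
    rw [← Pstep k (mk t k)]
    exact Pmono _ _ _ (hmk_chain t k)
  refine ⟨F, ?_, ?_, ?_, ?_⟩
  · intro s t hst
    simp only [hF]
    apply iUnion_mono
    intro k
    apply Pmono
    simp only [hmk]
    apply Nat.floor_le_floor
    have h : c s ≤ c t := by
      simp only [hc]
      exact max_le_max le_rfl (min_le_min hst le_rfl)
    nlinarith [pow_pos (show (0:ℝ) < 2 by norm_num) k]
  · intro t
    exact MeasurableSet.iUnion (fun k => Pmeas k _)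
  · intro t
    exact iUnion_subset (fun k => PsubA k _)
  · intro i t
    have hlim1 : Tendsto (fun k => μ i (P k (mk t k))) atTop (𝓝 (μ i (F t))) :=
      tendsto_measure_iUnion_atTop (Fchain t)
    have hval' : ∀ k, μ i (P k (mk t k)) = ENNReal.ofReal ((mk t k : ℝ) / 2^k) * μ i A := by
      intro k
      rw [Pval k _ (hmk_le t k) i, ENNReal.ofReal_div_of_pos (by positivity),
        ENNReal.ofReal_natCast,
        show ENNReal.ofReal ((2:ℝ)^k) = (2:ℝ≥0∞)^k by
          rw [ENNReal.ofReal_pow (by norm_num)]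
          norm_num]
      rw [div_eq_mul_inv, div_eq_mul_inv, mul_comm (μ i A), ← mul_assoc]
    have hreal : Tendsto (fun k : ℕ => (mk t k : ℝ) / 2^k) atTop (𝓝 (c t)) := by
      have hlow : ∀ k : ℕ, c t - (1/2)^k ≤ (mk t k : ℝ) / 2^k := by
        intro k
        have h1 : c t * 2^k - 1 < (mk t k : ℝ) := Nat.sub_one_lt_floor _
        have h2 : (0:ℝ) < 2^k := by positivity
        have h3 : (1/2:ℝ)^k = (2^k)⁻¹ := by rw [one_div, inv_pow]
        rw [h3, le_div_iff₀ h2]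
        have h4 : (2^k:ℝ)⁻¹ * 2^k = 1 := inv_mul_cancel₀ h2.ne'
        nlinarith
      have hhigh : ∀ k : ℕ, (mk t k : ℝ) / 2^k ≤ c t := by
        intro k
        have h1 : (mk t k : ℝ) ≤ c t * 2^k := Nat.floor_le (by positivity)
        have h2 : (0:ℝ) < 2^k := by positivity
        rw [div_le_iff₀ h2]
        linarith
      have hl : Tendsto (fun k : ℕ => c t - (1/2:ℝ)^k) atTop (𝓝 (c t)) := by
        have := tendsto_pow_atTop_nhds_zero_of_lt_one (show (0:ℝ) ≤ 1/2 by norm_num)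
          (show (1/2:ℝ) < 1 by norm_num)
        simpa using tendsto_const_nhds.sub this
      exact tendsto_of_tendsto_of_tendsto_of_le_of_le hl tendsto_const_nhds hlow hhigh
    have hlim2 : Tendsto (fun k => μ i (P k (mk t k))) atTop
        (𝓝 (ENNReal.ofReal (c t) * μ i A)) := by
      simp_rw [hval']
      exact ENNReal.Tendsto.mul_const
        ((ENNReal.continuous_ofReal.tendsto _).comp hreal) (Or.inr (measure_ne_top _ _))
    exact tendsto_nhds_unique hlim1 hlim2

end Filtration

section Halving

/-- Simultaneous halving of a measurable set for finitely many
nonatomic finite measures on ℝ. -/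
lemma halving_family (m : ℕ) : ∀ (μ : Fin m → Measure ℝ),
    (∀ i, IsFiniteMeasure (μ i)) → (∀ i, NoAtoms (μ i)) →
    ∀ A : Set ℝ, MeasurableSet A →
    ∃ B, B ⊆ A ∧ MeasurableSet B ∧ ∀ i, μ i B = μ i A / 2 := by
  induction m with
  | zero =>
    intro μ _ _ A hA
    exact ⟨∅, empty_subset A, MeasurableSet.empty, fun i => i.elim0⟩
  | succ m ih =>
    intro μ hfin hna A hA
    set μ' : Fin m → Measure ℝ := fun i => μ i.castSucc with hμ'
    haveI : ∀ i, IsFiniteMeasure (μ' i) := fun i => hfin _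
    set σ : Measure ℝ := μ (Fin.last m) with hσ
    haveI : IsFiniteMeasure σ := hfin _
    haveI : NullSingletonClass σ := hna _
    set ν : Measure ℝ := ∑ i, μ' i with hν
    haveI hνfin : IsFiniteMeasure ν := by
      constructor
      rw [hν, Measure.finset_sum_apply]
      exact ENNReal.sum_lt_top.2 (fun i _ => measure_lt_top _ _)
    -- each μ' i is dominated by ν
    have hle : ∀ (i : Fin m) (t : Set ℝ), μ' i t ≤ ν t := by
      intro i t
      rw [hν, Measure.finset_sum_apply]
      exact Finset.single_le_sum (f := fun j => μ' j t) (fun j _ => zero_le)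
        (Finset.mem_univ i)
    -- Lebesgue decomposition of σ with respect to ν
    set ρ : Measure ℝ := σ.singularPart ν with hρ
    set ξ : Measure ℝ := ν.withDensity (σ.rnDeriv ν) with hξ
    have hdecomp : σ = ρ + ξ := σ.haveLebesgueDecomposition_add ν
    obtain ⟨S, hSm, hρS, hνSc⟩ := Measure.mutuallySingular_singularPart σ ν
    have hξν : ξ ≪ ν := withDensity_absolutelyContinuous ν _
    -- null sets of ν inside S are σ-null
    have hnull : ∀ E : Set ℝ, E ⊆ S → ν E = 0 → σ E = 0 := by
      intro E hES hνE
      rw [hdecomp]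
      simp only [Measure.add_apply]
      rw [hξν hνE, measure_mono_null hES hρS]
      simp
    set A₁ : Set ℝ := A ∩ Sᶜ with hA₁
    set A₂ : Set ℝ := A ∩ S with hA₂
    have hA₁m : MeasurableSet A₁ := hA.inter hSm.compl
    have hA₂m : MeasurableSet A₂ := hA.inter hSm
    have hνA₁ : ν A₁ = 0 := measure_mono_null (inter_subset_right) hνSc
    have hμ'A₁ : ∀ i, μ' i A₁ = 0 := fun i => le_antisymm ((hle i A₁).trans_eq hνA₁) zero_le
    -- piece on the singular carrier complement: use Sierpinski for σ alone
    obtain ⟨B₁, hB₁sub, hB₁m, hB₁val⟩ := sierpinski_half σ A₁ hA₁m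
    -- piece on S: use the filtration coming from the inductive hypothesis
    obtain ⟨F, hFmono, hFm, hFsub, hFval⟩ := filtration_exists μ'
      (fun C hC => ih μ' (fun i => hfin _) (fun i => hna _) C hC) A₂ hA₂m
    set c : ℝ → ℝ := fun t => max 0 (min t 1) with hc
    have hclip : ∀ t, c t = max 0 (min t 1) := fun _ => rfl
    have hcLip : ∀ s t, s ≤ t → c t - c s ≤ t - s := by
      intro s t hst
      simp only [hc]
      rcases le_total t 1 with h1 | h1 <;> rcases le_total s 1 with h2 | h2 <;>
        rcases le_total t 0 with h3 | h3 <;> rcases le_total s 0 with h4 | h4 <;>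
        simp [max_def, min_def] <;> split_ifs <;> linarith
    have hcmono : Monotone c := fun s t hst =>
      max_le_max le_rfl (min_le_min hst le_rfl)
    have hc0 : ∀ t, 0 ≤ c t := fun t => le_max_left _ _
    -- ν applied to F t
    have hνF : ∀ t, ν (F t) = ENNReal.ofReal (c t) * ν A₂ := by
      intro t
      rw [hν, Measure.finset_sum_apply, Measure.finset_sum_apply, Finset.mul_sum]
      exact Finset.sum_congr rfl (fun i _ => hFval i t)
    -- σ of difference sets of the filtration, and continuity
    have hFS : ∀ t, F t ⊆ S := fun t => (hFsub t).trans inter_subset_right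
    have hσg : ∀ s t : ℝ, s ≤ t →
        σ (F t) = σ (F s) + σ (F t \ F s) := by
      intro s t hst
      rw [← measure_union (disjoint_sdiff_self_right) ((hFm t).diff (hFm s)),
        union_diff_cancel (hFmono hst)]
    set g : ℝ → ℝ := fun t => (σ (F t)).toReal with hg
    have hgmono : Monotone g := fun s t hst =>
      ENNReal.toReal_mono (measure_ne_top _ _) (measure_mono (hFmono hst))
    have hgdiff : ∀ s t : ℝ, s ≤ t → g t - g s = (σ (F t \ F s)).toReal := by
      intro s t hst
      rw [hg]
      simp only
      rw [hσg s t hst, ENNReal.toReal_add (measure_ne_top _ _) (measure_ne_top _ _)]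
      ring
    have hgcont : Continuous g := by
      rw [Metric.continuous_iff]
      intro t ε hε
      -- the decreasing sequence of difference sets
      set E : ℕ → Set ℝ := fun k => F (t + 1/(k+1)) \ F (t - 1/(k+1)) with hE
      have hEanti : Antitone E := by
        intro a b hab
        have hc1 : 1/((b:ℝ)+1) ≤ 1/((a:ℝ)+1) := by
          apply one_div_le_one_div_of_le
          · positivity
          · have : (a:ℝ) ≤ b := Nat.cast_le.2 hab
            linarith
        exact diff_subset_diff (hFmono (by linarith)) (hFmono (by linarith))
      have hνE : ∀ k : ℕ, ν (E k) ≤ ENNReal.ofReal (2/(k+1)) * ν A₂ := by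
        intro k
        have h1 : ν (E k) ≤ ν (F (t + 1/(k+1))) - ν (F (t - 1/(k+1))) := by
          rw [hE]
          simp only
          rw [measure_diff (hFmono (by
            have : (0:ℝ) < 1/((k:ℝ)+1) := by positivity
            linarith)) ((hFm _)).nullMeasurableSet (measure_ne_top _ _)]
        refine h1.trans ?_
        rw [hνF, hνF, ← ENNReal.sub_mul (fun _ _ => measure_ne_top _ _),
          ← ENNReal.ofReal_sub _ (hc0 _)]
        apply mul_le_mul_left (ENNReal.ofReal_le_ofReal _)
        have := hcLip (t - 1/(k+1)) (t + 1/(k+1)) (by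
          have : (0:ℝ) < 1/((k:ℝ)+1) := by positivity
          linarith)
        have h2 : t + 1/((k:ℝ)+1) - (t - 1/((k:ℝ)+1)) = 2/((k:ℝ)+1) := by ring
        linarith
      have hνlim : Tendsto (fun k : ℕ => ENNReal.ofReal (2/(k+1)) * ν A₂) atTop (𝓝 0) := by
        have h0 : Tendsto (fun k : ℕ => (2:ℝ)/(k+1)) atTop (𝓝 0) := by
          have := tendsto_one_div_add_atTop_nhds_zero_nat (𝕜 := ℝ)
          have h2 := this.const_mul (2:ℝ)
          simpa [div_eq_mul_inv, mul_comm] using h2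
        have h1 : Tendsto (fun k : ℕ => ENNReal.ofReal ((2:ℝ)/(k+1))) atTop (𝓝 0) := by
          have := (ENNReal.continuous_ofReal.tendsto 0).comp h0
          simpa [Function.comp_def] using this
        simpa using ENNReal.Tendsto.mul_const h1 (Or.inr (measure_ne_top _ _))
      have hνiInter : ν (⋂ k, E k) = 0 := by
        refine le_antisymm ?_ zero_le
        refine le_of_tendsto_of_tendsto' tendsto_const_nhds hνlim (fun k => ?_)
        exact (measure_mono (iInter_subset E k)).trans (hνE k)
      have hσiInter : σ (⋂ k, E k) = 0 :=
        hnull _ ((iInter_subset E 0).trans (diff_subset.trans (hFS _))) hνiInter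
      have hσlim : Tendsto (fun k => σ (E k)) atTop (𝓝 0) := by
        rw [← hσiInter]
        apply tendsto_measure_iInter_atTop
          (fun k => ((hFm _).diff (hFm _)).nullMeasurableSet) hEanti
          ⟨0, measure_ne_top _ _⟩
      have hσlim' : Tendsto (fun k => (σ (E k)).toReal) atTop (𝓝 0) := by
        have := (ENNReal.tendsto_toReal (a := 0) (by simp)).comp hσlim
        simpa [Function.comp_def] using this
      obtain ⟨k, hk⟩ := (hσlim'.eventually (eventually_lt_nhds hε)).exists
      refine ⟨1/(k+1), by positivity, fun s hs => ?_⟩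
      have habs := abs_lt.1 (by simpa [Real.dist_eq] using hs)
      have h1d : 1/((k:ℝ)+1) = ((k:ℝ)+1)⁻¹ := one_div _
      have hb1 : t - 1/(k+1) ≤ s := by rw [h1d]; linarith [habs.1]
      have hb2 : s ≤ t + 1/(k+1) := by rw [h1d]; linarith [habs.2]
      have hpos : (0:ℝ) < 1/((k:ℝ)+1) := by positivity
      have l1 := hgmono hb1
      have l2 := hgmono hb2
      have l3 := hgmono (show t - 1/((k:ℝ)+1) ≤ t by linarith)
      have l4 := hgmono (show t ≤ t + 1/((k:ℝ)+1) by linarith)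
      have hd := hgdiff (t - 1/(k+1)) (t + 1/(k+1)) (by linarith)
      rw [Real.dist_eq, abs_lt]
      have hEk : (σ (E k)).toReal = g (t+1/(k+1)) - g (t-1/(k+1)) := by rw [hd]
      constructor <;> linarith [hEk ▸ hk]
    -- endpoints of g
    have hσ0 : σ (F 0) = 0 := by
      apply hnull _ (hFS 0)
      rw [hνF]
      simp [hc]
    have hg0 : g 0 = 0 := by
      simp only [hg, hσ0, ENNReal.toReal_zero]
    have hσA₂F1 : σ (A₂ \ F 1) = 0 := by
      apply hnull _ (diff_subset.trans inter_subset_right)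
      rw [measure_diff (hFsub 1) (hFm 1).nullMeasurableSet (measure_ne_top _ _), hνF]
      simp [hc]
    have hσF1 : σ (F 1) = σ A₂ := by
      refine le_antisymm (measure_mono (hFsub 1)) ?_
      calc σ A₂ = σ (F 1 ∪ (A₂ \ F 1)) := by rw [union_diff_cancel (hFsub 1)]
        _ ≤ σ (F 1) + σ (A₂ \ F 1) := measure_union_le _ _
        _ = σ (F 1) := by rw [hσA₂F1, add_zero]
    have hg1 : g 1 = (σ A₂).toReal := by
      simp only [hg, hσF1]
    -- IVT for h t = g (t+1/2) - g t
    set h : ℝ → ℝ := fun t => g (t + 1/2) - g t with hh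
    have hhcont : Continuous h :=
      (hgcont.comp (continuous_id.add continuous_const)).sub hgcont
    set M : ℝ := (σ A₂).toReal with hM
    have hsum : h 0 + h (1/2) = M := by
      simp only [hh]
      rw [hg0]
      norm_num
      rw [hg1]
    have htarget : M/2 ∈ Set.uIcc (h 0) (h (1/2)) := by
      rcases le_total (h 0) (h (1/2)) with hcase | hcase
      · rw [Set.uIcc_of_le hcase]
        constructor <;> linarith
      · rw [Set.uIcc_of_ge hcase]
        constructor <;> linarith
    obtain ⟨t₀, ht₀mem, ht₀⟩ := intermediate_value_uIcc hhcont.continuousOn htarget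
    rw [Set.uIcc_of_le (by norm_num : (0:ℝ) ≤ 1/2)] at ht₀mem
    obtain ⟨ht₀0, ht₀1⟩ := ht₀mem
    set B₂ : Set ℝ := F (t₀ + 1/2) \ F t₀ with hB₂
    have hB₂m : MeasurableSet B₂ := (hFm _).diff (hFm _)
    have hB₂sub : B₂ ⊆ A₂ := diff_subset.trans (hFsub _)
    have ht₀' : g (t₀ + 1/2) - g t₀ = M/2 := ht₀
    have hσB₂ : σ B₂ = σ A₂ / 2 := by
      have h1 : (σ B₂).toReal = M / 2 := by
        rw [hB₂, ← hgdiff t₀ (t₀+1/2) (by linarith)]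
        exact ht₀'
      refine (ENNReal.toReal_eq_toReal_iff' (measure_ne_top _ _)
        ((lt_of_le_of_lt ENNReal.half_le_self (measure_lt_top σ A₂)).ne)).1 ?_
      rw [h1, ENNReal.toReal_div, hM]
      norm_num
    have hcval : ∀ s : ℝ, 0 ≤ s → s ≤ 1 → c s = s := by
      intro s h0 h1
      simp only [hc]
      rw [min_eq_left h1, max_eq_right h0]
    have hhalfE : ENNReal.ofReal (1/2 : ℝ) = 1/2 := by
      rw [one_div, one_div, ENNReal.ofReal_inv_of_pos (by norm_num)]
      norm_num
    have hμ'B₂ : ∀ i, μ' i B₂ = μ' i A₂ / 2 := by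
      intro i
      rw [hB₂]
      rw [measure_diff (hFmono (by linarith)) (hFm _).nullMeasurableSet (measure_ne_top _ _),
        hFval, hFval]
      have e1 : (max 0 (min t₀ 1)) = c t₀ := rfl
      have e2 : (max 0 (min (t₀ + 1/2) 1)) = c (t₀ + 1/2) := rfl
      rw [e1, e2, ← ENNReal.sub_mul (fun _ _ => measure_ne_top _ _),
        ← ENNReal.ofReal_sub _ (hc0 _),
        hcval t₀ ht₀0 (by linarith), hcval (t₀+1/2) (by linarith) (by linarith),
        show t₀ + 1/2 - t₀ = 1/2 by ring, hhalfE]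
      simp [ENNReal.div_eq_inv_mul]
    -- assemble
    have hdisj : Disjoint B₁ B₂ := Disjoint.mono (hB₁sub.trans inter_subset_right)
      (hB₂sub.trans inter_subset_right) disjoint_compl_left
    have hBsplit : ∀ κ : Measure ℝ, κ (B₁ ∪ B₂) = κ B₁ + κ B₂ := fun κ =>
      measure_union hdisj hB₂m
    have hAdecomp : ∀ κ : Measure ℝ, κ A = κ A₁ + κ A₂ := by
      intro κ
      rw [hA₁, hA₂, ← measure_union ?disj (hA.inter hSm)]
      · rw [← inter_union_distrib_left, compl_union_self, inter_univ]
      · exact Disjoint.mono inter_subset_right inter_subset_right disjoint_compl_left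
    refine ⟨B₁ ∪ B₂, union_subset (hB₁sub.trans inter_subset_left)
      (hB₂sub.trans inter_subset_left), hB₁m.union hB₂m, ?_⟩
    intro i
    refine Fin.lastCases ?_ (fun j => ?_) i
    · show σ (B₁ ∪ B₂) = σ A / 2
      rw [hBsplit σ, hB₁val, hσB₂, hAdecomp σ, ENNReal.div_add_div_same]
    · show μ' j (B₁ ∪ B₂) = μ' j A / 2
      have hB₁0 : μ' j B₁ = 0 :=
        le_antisymm ((measure_mono hB₁sub).trans_eq (hμ'A₁ j)) zero_le
      rw [hBsplit (μ' j), hAdecomp (μ' j), hB₁0, hμ'A₁ j, hμ'B₂ j, zero_add, zero_add]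

end Halving

/-- For every `n ≥ 1` and nonatomic Borel probability measures `μ i` on `[0,1]`,
there is a partial allocation (pairwise disjoint measurable pieces, not necessarily
covering the cake) that is proportional with respect to the whole cake
(`μ i (X i) ≥ 1/n`) and envy-free (`μ i (X i) ≥ μ i (X j)`). -/
theorem proportional_envy_free_partial_allocation_exists
    (n : ℕ) (hn : 1 ≤ n)
    (μ : Fin n → Measure (Set.Icc (0:ℝ) 1))
    (hprob : ∀ i, IsProbabilityMeasure (μ i))
    (hna : ∀ i, NoAtoms (μ i)) :
    ∃ X : Fin n → Set (Set.Icc (0:ℝ) 1),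
      (∀ i, MeasurableSet (X i)) ∧
      (Pairwise fun i j => Disjoint (X i) (X j)) ∧
      (∀ i, (n : ℝ≥0∞)⁻¹ ≤ μ i (X i)) ∧
      (∀ i j, μ i (X j) ≤ μ i (X i)) := by
  haveI := hprob
  haveI : ∀ i, NullSingletonClass (μ i) := hna
  set ν : Fin n → Measure ℝ := fun i => (μ i).map (Subtype.val) with hνdef
  have hmap : ∀ (i : Fin n) (E : Set ℝ), MeasurableSet E →
      ν i E = μ i (Subtype.val ⁻¹' E) := by
    intro i E hE
    rw [hνdef]
    exact Measure.map_apply measurable_subtype_coe hE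
  haveI hνprob : ∀ i, IsProbabilityMeasure (ν i) := fun i =>
    Measure.isProbabilityMeasure_map measurable_subtype_coe.aemeasurable
  haveI hνfin : ∀ i, IsFiniteMeasure (ν i) := fun i => inferInstance
  haveI hνna : ∀ i, NoAtoms (ν i) := by
    intro i
    constructor
    intro x
    rw [hmap i {x} (measurableSet_singleton x)]
    apply Set.Subsingleton.measure_zero
    intro a ha b hb
    exact Subtype.ext (ha.trans hb.symm)
  obtain ⟨F, hFmono, hFm, -, hFval⟩ := filtration_exists ν
    (halving_family n ν hνfin hνna) Set.univ MeasurableSet.univ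
  have hnpos : (0:ℝ) < n := by exact_mod_cast hn
  -- clamp values
  have hclamp : ∀ k : ℕ, k ≤ n → max 0 (min ((k:ℝ)/n) 1) = (k:ℝ)/n := by
    intro k hk
    have h0 : (0:ℝ) ≤ (k:ℝ)/n := by positivity
    have h1 : (k:ℝ)/n ≤ 1 := by
      rw [div_le_one hnpos]
      exact_mod_cast hk
    rw [min_eq_left h1, max_eq_right h0]
  set Y : Fin n → Set ℝ := fun j => F (((j:ℕ)+1:ℕ)/n) \ F ((j:ℕ)/n) with hY
  have hYm : ∀ j, MeasurableSet (Y j) := fun j => (hFm _).diff (hFm _)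
  have hstep : ∀ j : Fin n, ((j:ℕ):ℝ)/n ≤ (((j:ℕ)+1:ℕ):ℝ)/n := by
    intro j
    gcongr
    push_cast
    linarith
  have hYval : ∀ i j, ν i (Y j) = (n : ℝ≥0∞)⁻¹ := by
    intro i j
    have hj1 : (j:ℕ)+1 ≤ n := j.isLt
    have hj0 : (j:ℕ) ≤ n := le_of_lt j.isLt
    rw [hY]
    rw [measure_diff (hFmono (hstep j)) (hFm _).nullMeasurableSet (measure_ne_top _ _),
      hFval, hFval, measure_univ, mul_one, mul_one, hclamp _ hj1, hclamp _ hj0,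
      ← ENNReal.ofReal_sub _ (by positivity)]
    have harith : (((j:ℕ)+1:ℕ):ℝ)/n - ((j:ℕ):ℝ)/n = 1/n := by
      push_cast
      field_simp
      ring
    rw [harith, one_div, ENNReal.ofReal_inv_of_pos hnpos, ENNReal.ofReal_natCast]
  have hYdisjlt : ∀ j j' : Fin n, j < j' → Disjoint (Y j) (Y j') := by
    intro j j' hlt
    have hle : (((j:ℕ)+1:ℕ):ℝ)/n ≤ ((j':ℕ):ℝ)/n := by
      gcongr
      have h1 : (j:ℕ) < (j':ℕ) := hlt
      push_cast
      have := Nat.succ_le_of_lt h1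
      exact_mod_cast this
    have hsub : Y j ⊆ F (((j':ℕ):ℝ)/n) := diff_subset.trans (hFmono hle)
    exact disjoint_sdiff_self_right.mono_left hsub
  set X : Fin n → Set (Set.Icc (0:ℝ) 1) := fun j => Subtype.val ⁻¹' Y j with hX
  have hXval : ∀ i j, μ i (X j) = (n : ℝ≥0∞)⁻¹ := by
    intro i j
    rw [hX, ← hmap i (Y j) (hYm j), hYval]
  refine ⟨X, fun j => measurable_subtype_coe (hYm j), ?_, ?_, ?_⟩
  · intro j j' hne
    rcases hne.lt_or_gt with hlt | hlt
    · exact (hYdisjlt j j' hlt).preimage _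
    · exact ((hYdisjlt j' j hlt).preimage _).symm
  · intro i
    exact le_of_eq (hXval i i).symm
  · intro i j
    rw [hXval i j, hXval i i]
end

section
/- Existence content of the Core Protocol: let n ≥ 2 and let μ_1, …, μ_n be nonatomic Borel probability measures on [0,1], with agent 1 as the cutter. There exist cut points 0 = t_0 ≤ t_1 ≤ ⋯ ≤ t_n = 1 with μ_1([t_{k-1}, t_k]) = 1/n for every k ∈ {1,…,n}, an injective map σ from agents {1,…,n} to pieces {1,…,n}, and points s_i ∈ [t_{σ(i)-1}, t_{σ(i)}] such that, setting X_i = [s_i, t_{σ(i)}]: (i) μ_i(X_i) ≥ μ_i(X_j) for all i, j (the partial allocation is envy-free); (ii) s_1 = t_{σ(1)-1}, i.e. the cutter receives a complete piece; and (iii) s_i = t_{σ(i)-1} for at least one agent i ≠ 1, i.e. at least one non-cutter agent also receives a complete piece. -/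
set_option linter.unusedSectionVars false
set_option linter.unusedVariables false
set_option maxHeartbeats 2000000

open MeasureTheory Set Filter Topology
open scoped ENNReal

section CDF

variable (μ : Measure ℝ) [IsProbabilityMeasure μ] [NullSingletonClass μ]

noncomputable def cdfR (x : ℝ) : ℝ := (μ (Iic x)).toReal

lemma cdfR_mono : Monotone (cdfR μ) := by
  intro a b hab
  exact ENNReal.toReal_mono (measure_ne_top μ _) (measure_mono (Iic_subset_Iic.2 hab))

lemma cdfR_nonneg (x : ℝ) : 0 ≤ cdfR μ x := ENNReal.toReal_nonneg

lemma measure_Icc_toReal {a b : ℝ} (hab : a ≤ b) :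
    (μ (Icc a b)).toReal = cdfR μ b - cdfR μ a := by
  have h2 : μ (Iic b) = μ (Iic a) + μ (Ioc a b) := by
    rw [← Iic_union_Ioc_eq_Iic hab, measure_union (Iic_disjoint_Ioc le_rfl) measurableSet_Ioc]
  have h3 : μ (Icc a b) = μ (Ioc a b) := (measure_congr (Ioc_ae_eq_Icc (μ := μ))).symm
  rw [h3, cdfR, cdfR, h2, ENNReal.toReal_add (measure_ne_top μ _) (measure_ne_top μ _)]
  ring

lemma cdfR_continuous : Continuous (cdfR μ) := by
  rw [continuous_iff_continuousAt]
  intro x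
  rw [Metric.continuousAt_iff]
  intro ε hε
  have hset : ⋂ m : ℕ, Icc (x - 1/(m+1)) (x + 1/(m+1)) = {x} := by
    apply Subset.antisymm
    · intro y hy
      simp only [mem_iInter, mem_Icc] at hy
      have h1 : ∀ m : ℕ, |y - x| ≤ 1/(m+1) := by
        intro m
        rw [abs_le]
        constructor <;> linarith [(hy m).1, (hy m).2]
      have h0 : |y - x| ≤ 0 := by
        by_contra h
        push_neg at h
        obtain ⟨m, hm⟩ := exists_nat_one_div_lt h
        linarith [h1 m]
      have : |y - x| = 0 := le_antisymm h0 (abs_nonneg _)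
      simp only [mem_singleton_iff]
      linarith [abs_eq_zero.mp this]
    · intro y hy
      simp only [mem_singleton_iff] at hy
      subst hy
      simp only [mem_iInter, mem_Icc]
      intro m
      have : (0:ℝ) < 1/(m+1) := by positivity
      constructor <;> linarith
  have htend : Tendsto (fun m : ℕ => μ (Icc (x - 1/(m+1)) (x + 1/(m+1)))) atTop (𝓝 0) := by
    have := MeasureTheory.tendsto_measure_iInter_atTop (μ := μ)
      (s := fun m : ℕ => Icc (x - 1/(m+1)) (x + 1/(m+1)))
      (fun m => measurableSet_Icc.nullMeasurableSet)
      (fun a b hab => by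
        apply Icc_subset_Icc
        · have : 1/((b:ℝ)+1) ≤ 1/((a:ℝ)+1) := by
            apply one_div_le_one_div_of_le
            · positivity
            · exact_mod_cast by omega
          linarith
        · have : 1/((b:ℝ)+1) ≤ 1/((a:ℝ)+1) := by
            apply one_div_le_one_div_of_le
            · positivity
            · exact_mod_cast by omega
          linarith)
      ⟨0, measure_ne_top μ _⟩
    rw [hset] at this
    simpa [measure_singleton, Function.comp_def] using this
  have htendR : Tendsto (fun m : ℕ => (μ (Icc (x - 1/(m+1)) (x + 1/(m+1)))).toReal) atTop (𝓝 0) := by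
    have h0 : (0:ℝ≥0∞) ≠ ⊤ := by simp
    simpa [Function.comp_def] using (ENNReal.tendsto_toReal h0).comp htend
  obtain ⟨m, hm⟩ := (htendR.eventually_lt_const hε).exists
  refine ⟨1/(m+1), by positivity, ?_⟩
  intro y hy
  rw [Real.dist_eq] at hy
  have hsub : ∀ u v : ℝ, u ≤ v → x - 1/(m+1) ≤ u → v ≤ x + 1/(m+1) →
      (μ (Icc u v)).toReal ≤ (μ (Icc (x - 1/(m+1)) (x + 1/(m+1)))).toReal := by
    intro u v huv h1 h2
    exact ENNReal.toReal_mono (measure_ne_top μ _) (measure_mono (Icc_subset_Icc h1 h2))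
  have habs : |y - x| ≤ 1/(m+1) := le_of_lt hy
  rw [abs_le] at habs
  have hd : (0:ℝ) < 1/(m+1) := by positivity
  rw [Real.dist_eq]
  rcases le_total y x with h | h
  · have : |cdfR μ y - cdfR μ x| = cdfR μ x - cdfR μ y := by
      rw [abs_of_nonpos (by linarith [cdfR_mono μ h])]; ring
    rw [this, ← measure_Icc_toReal μ h]
    calc (μ (Icc y x)).toReal ≤ _ := hsub y x h (by linarith) (by linarith)
    _ < ε := hm
  · have : |cdfR μ y - cdfR μ x| = cdfR μ y - cdfR μ x := by
      rw [abs_of_nonneg (by linarith [cdfR_mono μ h])]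
    rw [this, ← measure_Icc_toReal μ h]
    calc (μ (Icc x y)).toReal ≤ _ := hsub x y h (by linarith) (by linarith)
    _ < ε := hm

end CDF

section Cuts

variable (μ : Measure ℝ) [IsProbabilityMeasure μ] [NullSingletonClass μ]

lemma cdfR_zero (h01 : μ (Icc (0:ℝ) 1) = 1) : cdfR μ 0 = 0 := by
  have hc : μ (Icc (0:ℝ) 1)ᶜ = 0 := by
    have := measure_compl (μ := μ) (s := Icc (0:ℝ) 1) measurableSet_Icc (measure_ne_top μ _)
    rw [h01, measure_univ] at this
    simpa using this
  have h1 : μ (Iio (0:ℝ)) = 0 := by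
    apply measure_mono_null _ hc
    intro x hx
    simp only [mem_Iio] at hx
    simp only [mem_compl_iff, mem_Icc, not_and_or, not_le]
    left; exact hx
  have h2 : μ (Iic (0:ℝ)) = 0 := by
    have he : Iic (0:ℝ) = Iio 0 ∪ {0} := by
      ext x; simp [le_iff_lt_or_eq]
    rw [he]
    apply le_antisymm _ zero_le
    calc μ (Iio (0:ℝ) ∪ {0}) ≤ μ (Iio (0:ℝ)) + μ {0} := measure_union_le _ _
    _ = 0 := by rw [h1, measure_singleton]; simp
  rw [cdfR, h2]; simp

lemma cdfR_one (h01 : μ (Icc (0:ℝ) 1) = 1) : cdfR μ 1 = 1 := by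
  have h2 : μ (Iic (1:ℝ)) = 1 := by
    apply le_antisymm prob_le_one
    rw [← h01]
    exact measure_mono (fun x hx => hx.2)
  rw [cdfR, h2]; simp

/-- Construction of the cut points. -/
lemma exists_cuts (n : ℕ) (hn : 1 ≤ n) (h01 : μ (Icc (0:ℝ) 1) = 1) :
    ∃ T : ℕ → ℝ, T 0 = 0 ∧ (∀ m, n ≤ m → T m = 1) ∧ Monotone T ∧
      (∀ m, T m ∈ Icc (0:ℝ) 1) ∧ (∀ m, m ≤ n → cdfR μ (T m) = m / n) := by
  set F := cdfR μ with hF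
  have hFc : Continuous F := cdfR_continuous μ
  have hFm : Monotone F := cdfR_mono μ
  have hF0 : F 0 = 0 := cdfR_zero μ h01
  have hF1 : F 1 = 1 := cdfR_one μ h01
  set S : ℕ → Set ℝ := fun m => {x ∈ Icc (0:ℝ) 1 | (m:ℝ)/n ≤ F x} with hS
  have hnpos : (0:ℝ) < n := by exact_mod_cast hn
  have hmem1 : ∀ m, m ≤ n → 1 ∈ S m := by
    intro m hm
    refine ⟨⟨zero_le_one, le_rfl⟩, ?_⟩
    rw [hF1, div_le_one hnpos]
    exact_mod_cast hm
  have hbdd : ∀ m, BddBelow (S m) := fun m => ⟨0, fun x hx => hx.1.1⟩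
  have hclosed : ∀ m, IsClosed (S m) := by
    intro m
    have he : S m = Icc (0:ℝ) 1 ∩ {x | (m:ℝ)/n ≤ F x} := rfl
    rw [he]
    exact isClosed_Icc.inter (isClosed_le continuous_const hFc)
  classical
  set T : ℕ → ℝ := fun m => if n ≤ m then 1 else sInf (S m) with hTdef
  have hTif : ∀ m, T m = if n ≤ m then 1 else sInf (S m) := fun m => rfl
  have hTlt : ∀ m, m < n → T m = sInf (S m) := by
    intro m hm; rw [hTif, if_neg (by omega)]
  have hTge : ∀ m, n ≤ m → T m = 1 := by
    intro m hm; rw [hTif, if_pos hm]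
  have hTmem : ∀ m, m ≤ n → T m ∈ S m := by
    intro m hm
    rcases eq_or_lt_of_le hm with h | h
    · rw [h, hTge n le_rfl]; exact hmem1 n le_rfl
    · rw [hTlt m h]
      exact (hclosed m).csInf_mem ⟨1, hmem1 m hm⟩ (hbdd m)
  have hTval : ∀ m, m ≤ n → F (T m) = m / n := by
    intro m hm
    rcases eq_or_lt_of_le hm with h | h
    · rw [h, hTge n le_rfl, hF1, div_self (ne_of_gt hnpos)]
    · have hq : (m:ℝ)/n ∈ Icc (F 0) (F 1) := by
        rw [hF0, hF1]
        constructor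
        · positivity
        · rw [div_le_one hnpos]; exact_mod_cast le_of_lt h
      obtain ⟨x, hx, hxv⟩ := intermediate_value_Icc zero_le_one hFc.continuousOn hq
      have hxS : x ∈ S m := ⟨hx, le_of_eq hxv.symm⟩
      have hle : T m ≤ x := by
        rw [hTlt m h]
        exact csInf_le (hbdd m) hxS
      exact le_antisymm (hxv ▸ hFm hle) (hTmem m hm).2
  refine ⟨T, ?_, hTge, ?_, ?_, hTval⟩
  · have h0S : (0:ℝ) ∈ S 0 := ⟨⟨le_rfl, zero_le_one⟩, by rw [hF0]; simp⟩
    rw [hTlt 0 (by omega)]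
    exact le_antisymm (csInf_le (hbdd 0) h0S) (le_csInf ⟨1, hmem1 0 (by omega)⟩ (fun x hx => hx.1.1))
  · intro a b hab
    by_cases ha : n ≤ a
    · rw [hTge a ha, hTge b (le_trans ha hab)]
    · push_neg at ha
      by_cases hb : n ≤ b
      · rw [hTge b hb]
        exact (hTmem a (le_of_lt ha)).1.2
      · push_neg at hb
        rw [hTlt a ha, hTlt b hb]
        apply csInf_le_csInf (hbdd a) ⟨1, hmem1 b (le_of_lt hb)⟩
        intro x hx
        refine ⟨hx.1, le_trans ?_ hx.2⟩
        have hc : (a:ℝ) ≤ (b:ℝ) := by exact_mod_cast hab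
        gcongr
  · intro m
    by_cases h : m ≤ n
    · exact (hTmem m h).1
    · rw [hTge m (by omega)]
      exact ⟨zero_le_one, le_rfl⟩

end Cuts

section Auction

variable {n : ℕ} (N : ℕ) (V : Fin n → Fin n → ℕ → ℝ) (c : Fin n)

/-- Validity invariants of an auction state `(A, pr)`. -/
structure AucValid (A : Fin n → Option (Fin n)) (pr : Fin n → ℕ) : Prop where
  inj : ∀ i j k, A i = some k → A j = some k → i = j
  prle : ∀ k, pr k ≤ N
  unheld0 : ∀ k, (∀ i, A i ≠ some k) → pr k = 0
  ef : ∀ i k, A i = some k → ∀ l, V i l (pr l + 1) ≤ V i k (pr k)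
  cut0 : ∀ k, A c = some k → pr k = 0
  cfree : A c = none → ∃ w k, w ≠ c ∧ A w = some k ∧ pr k ≤ 1
  fin1 : (∀ i, ∃ k, A i = some k) → ∃ w k, w ≠ c ∧ A w = some k ∧ pr k ≤ 1

/-- Potential function for termination. -/
noncomputable def aucPhi (A : Fin n → Option (Fin n)) (pr : Fin n → ℕ) : ℕ :=
  (∑ k : Fin n, (N - pr k)) * n + (Finset.univ.filter (fun i => A i = none)).card

/-- If some agent is unassigned, some piece is unheld. -/
lemma exists_unheld (A : Fin n → Option (Fin n))
    (hinj : ∀ i j k, A i = some k → A j = some k → i = j)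
    {i₀ : Fin n} (h : A i₀ = none) : ∃ k, ∀ i, A i ≠ some k := by
  by_contra hc
  push_neg at hc
  choose f hf using hc
  have hfinj : Function.Injective f := by
    intro k₁ k₂ he
    have h1 := hf k₁
    have h2 := hf k₂
    rw [he] at h1
    rw [h1] at h2
    exact (Option.some_inj.mp h2)
  obtain ⟨k, hk⟩ := Finite.injective_iff_surjective.mp hfinj i₀
  have h2 := hf k
  rw [hk, h] at h2
  exact nomatch h2

/-- The cutter's claim step. -/
lemma auc_step_cutter (A : Fin n → Option (Fin n)) (pr : Fin n → ℕ)
    (hV4 : ∀ k l p, V c l p ≤ V c k 0)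
    (S : AucValid N V c A pr) (hc : A c = none) :
    ∃ A' pr', AucValid N V c A' pr' ∧ aucPhi N A' pr' < aucPhi N A pr := by
  classical
  obtain ⟨k₀, hk₀⟩ := exists_unheld A S.inj hc
  refine ⟨Function.update A c (some k₀), pr, ?_, ?_⟩
  · constructor
    · intro i j k hi hj
      rcases eq_or_ne i c with hic | hic <;> rcases eq_or_ne j c with hjc | hjc
    
      · rw [hic, hjc]
      · subst hic
        rw [Function.update_self] at hi
        rw [Function.update_of_ne hjc] at hj
        rw [← hi] at hj
        exact absurd hj (hk₀ j)
      · subst hjc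
        rw [Function.update_self] at hj
        rw [Function.update_of_ne hic] at hi
        rw [← hj] at hi
        exact absurd hi (hk₀ i)
      · rw [Function.update_of_ne hic] at hi
        rw [Function.update_of_ne hjc] at hj
        exact S.inj i j k hi hj
    · exact S.prle
    · intro k hk
      apply S.unheld0
      intro i hik
      rcases eq_or_ne i c with hic | hic
      · rw [hic, hc] at hik
        exact nomatch hik
      · exact hk i (by rwa [Function.update_of_ne hic])
    · intro i k hi l
      rcases eq_or_ne i c with hic | hic
      · subst hic
        rw [Function.update_self, Option.some_inj] at hi
        subst hi
        rw [S.unheld0 k₀ hk₀]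
        exact hV4 k₀ l _
      · rw [Function.update_of_ne hic] at hi
        exact S.ef i k hi l
    · intro k hk
      rw [Function.update_self, Option.some_inj] at hk
      subst hk
      exact S.unheld0 k₀ hk₀
    · intro h
      rw [Function.update_self] at h
      exact nomatch h
    · intro _
      obtain ⟨w, k, hw, hwk, hpk⟩ := S.cfree hc
      exact ⟨w, k, hw, by rwa [Function.update_of_ne hw], hpk⟩
  · unfold aucPhi
    have hsub : (Finset.univ.filter (fun i => Function.update A c (some k₀) i = none))
        = (Finset.univ.filter (fun i => A i = none)).erase c := by
      ext i
      simp only [Finset.mem_filter, Finset.mem_univ, true_and, Finset.mem_erase]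
      constructor
      · intro hi
        rcases eq_or_ne i c with hic | hic
        · subst hic; rw [Function.update_self] at hi; exact nomatch hi
        · rw [Function.update_of_ne hic] at hi; exact ⟨hic, hi⟩
      · intro ⟨hic, hi⟩
        rwa [Function.update_of_ne hic]
    rw [hsub]
    have hcmem : c ∈ Finset.univ.filter (fun i => A i = none) := by
      simp only [Finset.mem_filter, Finset.mem_univ, true_and]; exact hc
    have h1 := Finset.card_erase_of_mem hcmem
    have h2 : 0 < (Finset.univ.filter (fun i => A i = none)).card := Finset.card_pos.mpr ⟨c, hcmem⟩
    omega


/-- The non-cutter bidding step. -/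
lemma auc_step_noncutter (hn : 2 ≤ n) (A : Fin n → Option (Fin n)) (pr : Fin n → ℕ)
    (hV1 : ∀ i k, Antitone (V i k)) (hV2 : ∀ i k, V i k N = 0) (hV3 : ∀ i k p, 0 ≤ V i k p)
    (S : AucValid N V c A pr) (hc : A c ≠ none) {z : Fin n} (hz : A z = none) :
    ∃ A' pr', AucValid N V c A' pr' ∧ aucPhi N A' pr' < aucPhi N A pr := by
  classical
  have hzc : z ≠ c := fun h => hc (h ▸ hz)
  set bid : Fin n → ℕ := fun l => if ∃ i, A i = some l then pr l + 1 else pr l with hbid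
  set Fe : Finset (Fin n) := Finset.univ.filter (fun l => (¬ ∃ i, A i = some l) ∨ pr l < N) with hFe
  have hFeNe : Fe.Nonempty := by
    obtain ⟨k, hk⟩ := exists_unheld A S.inj hz
    exact ⟨k, by simp only [hFe, Finset.mem_filter, Finset.mem_univ, true_and]; left; push_neg; exact hk⟩
  obtain ⟨k₀, hk₀Fe, hk₀max⟩ := Finset.exists_max_image Fe (fun l => V z l (bid l)) hFeNe
  have hk₀feas : (¬ ∃ i, A i = some k₀) ∨ pr k₀ < N := by
    simpa only [hFe, Finset.mem_filter, Finset.mem_univ, true_and] using hk₀Fe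
  set A' : Fin n → Option (Fin n) :=
    fun i => if i = z then some k₀ else if A i = some k₀ then none else A i with hA'
  set pr' : Fin n → ℕ := Function.update pr k₀ (bid k₀) with hpr'
  have hA'z : A' z = some k₀ := by rw [hA']; simp
  have hA'ne : ∀ i, i ≠ z → A i ≠ some k₀ → A' i = A i := by
    intro i hiz hik
    rw [hA']; simp only [if_neg hiz, if_neg hik]
  have hA'disp : ∀ i, i ≠ z → A i = some k₀ → A' i = none := by
    intro i hiz hik
    rw [hA']; simp only [if_neg hiz, if_pos hik]
  have hpr'k₀ : pr' k₀ = bid k₀ := by rw [hpr']; simp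
  have hpr'ne : ∀ l, l ≠ k₀ → pr' l = pr l := by
    intro l hl; rw [hpr']; exact Function.update_of_ne hl _ _
  have hbidge : pr k₀ ≤ bid k₀ := by
    simp only [hbid]; split <;> omega
  have hbidle : bid k₀ ≤ N := by
    simp only [hbid]
    rcases hk₀feas with h | h
    · rw [if_neg h]; exact S.prle k₀
    · split <;> omega
  refine ⟨A', pr', ?_, ?_⟩
  · constructor
    · -- inj
      intro i j k hi hj
      rcases eq_or_ne i z with hiz | hiz <;> rcases eq_or_ne j z with hjz | hjz
      · rw [hiz, hjz]
      · subst hiz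
        rw [hA'z, Option.some_inj] at hi
        subst hi
        by_cases hjk : A j = some k₀
        · rw [hA'disp j hjz hjk] at hj; exact nomatch hj
        · rw [hA'ne j hjz hjk] at hj; exact absurd hj hjk
      · subst hjz
        rw [hA'z, Option.some_inj] at hj
        subst hj
        by_cases hik : A i = some k₀
        · rw [hA'disp i hiz hik] at hi; exact nomatch hi
        · rw [hA'ne i hiz hik] at hi; exact absurd hi hik
      · by_cases hik : A i = some k₀
        · rw [hA'disp i hiz hik] at hi; exact nomatch hi
        · by_cases hjk : A j = some k₀
          · rw [hA'disp j hjz hjk] at hj; exact nomatch hj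
          · rw [hA'ne i hiz hik] at hi
            rw [hA'ne j hjz hjk] at hj
            exact S.inj i j k hi hj
    · -- prle
      intro k
      rcases eq_or_ne k k₀ with h | h
      · rw [h, hpr'k₀]; exact hbidle
      · rw [hpr'ne k h]; exact S.prle k
    · -- unheld0
      intro k hk
      have hkk₀ : k ≠ k₀ := by
        intro h
        exact hk z (h ▸ hA'z)
      rw [hpr'ne k hkk₀]
      apply S.unheld0
      intro i hik
      have hiz : i ≠ z := by
        intro h; rw [h, hz] at hik; exact nomatch hik
      have hik₀ : A i ≠ some k₀ := by
        rw [hik]; exact fun h => hkk₀ (Option.some_inj.mp h)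
      exact hk i (by rw [hA'ne i hiz hik₀]; exact hik)
    · -- ef
      intro i k hi l
      rcases eq_or_ne i z with hiz | hiz
      · -- the bidder
        subst hiz
        rw [hA'z, Option.some_inj] at hi
        subst hi
        rw [hpr'k₀]
        rcases eq_or_ne l k₀ with hl | hl
        · rw [hl, hpr'k₀]
          exact hV1 i k₀ (Nat.le_succ _)
        · rw [hpr'ne l hl]
          by_cases hheld : ∃ j, A j = some l
          · by_cases hprl : pr l < N
            · have hfe : l ∈ Fe := by
                simp only [hFe, Finset.mem_filter, Finset.mem_univ, true_and]; right; exact hprl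
              have h2 := hk₀max l hfe
              simp only [hbid, if_pos hheld] at h2
              exact h2
            · push_neg at hprl
              have hprlN : pr l = N := le_antisymm (S.prle l) hprl
              calc V i l (pr l + 1) ≤ V i l N := hV1 i l (by omega)
              _ = 0 := hV2 i l
              _ ≤ _ := hV3 i k₀ _
          · have hfe : l ∈ Fe := by
              simp only [hFe, Finset.mem_filter, Finset.mem_univ, true_and]; left; exact hheld
            have h1 := hk₀max l hfe
            simp only [hbid, if_neg hheld] at h1
            calc V i l (pr l + 1) ≤ V i l (pr l) := hV1 i l (Nat.le_succ _)
            _ ≤ _ := h1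
      · -- other assigned agents
        have hik₀ : A i ≠ some k₀ := by
          intro h
          rw [hA'disp i hiz h] at hi
          exact nomatch hi
        rw [hA'ne i hiz hik₀] at hi
        have hkk₀ : k ≠ k₀ := by
          intro h; exact hik₀ (h ▸ hi)
        rw [hpr'ne k hkk₀]
        rcases eq_or_ne l k₀ with hl | hl
        · rw [hl, hpr'k₀]
          calc V i k₀ (bid k₀ + 1) ≤ V i k₀ (pr k₀ + 1) := hV1 i k₀ (by omega)
          _ ≤ V i k (pr k) := S.ef i k hi k₀
        · rw [hpr'ne l hl]
          exact S.ef i k hi l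
    · -- cut0
      intro k hk
      by_cases hck : A c = some k₀
      · rw [hA'disp c (Ne.symm hzc) hck] at hk
        exact nomatch hk
      · rw [hA'ne c (Ne.symm hzc) hck] at hk
        have hkk₀ : k ≠ k₀ := by
          intro h; exact hck (h ▸ hk)
        rw [hpr'ne k hkk₀]
        exact S.cut0 k hk
    · -- cfree
      intro hA'c
      by_cases hck : A c = some k₀
      · -- the cutter was displaced
        refine ⟨z, k₀, hzc, hA'z, ?_⟩
        rw [hpr'k₀]
        simp only [hbid, if_pos (⟨c, hck⟩ : ∃ i, A i = some k₀), S.cut0 k₀ hck]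
        omega
      · rcases Option.eq_none_or_eq_some (A c) with h | ⟨k, h⟩
        · exact absurd h hc
        · rw [hA'ne c (Ne.symm hzc) hck, h] at hA'c
          exact nomatch hA'c
    · -- fin1
      intro hall
      have hunheld : ¬ ∃ i, A i = some k₀ := by
        rintro ⟨y, hy⟩
        have hyz : y ≠ z := by
          intro h; rw [h, hz] at hy; exact nomatch hy
        obtain ⟨k, hk⟩ := hall y
        rw [hA'disp y hyz hy] at hk
        exact nomatch hk
      refine ⟨z, k₀, hzc, hA'z, ?_⟩
      rw [hpr'k₀]
      simp only [hbid, if_neg hunheld]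
      rw [S.unheld0 k₀ (by push_neg at hunheld; exact hunheld)]
      omega
  · -- potential decreases
    unfold aucPhi
    by_cases hheld : ∃ i, A i = some k₀
    · -- displacement: price sum decreases by one, unassigned count grows by at most one
      obtain ⟨y, hy⟩ := hheld
      have hyz : y ≠ z := by
        intro h; rw [h, hz] at hy; exact nomatch hy
      have hprk₀ : pr k₀ < N := by
        rcases hk₀feas with h | h
        · exact absurd ⟨y, hy⟩ h
        · exact h
      have hbidval : bid k₀ = pr k₀ + 1 := by
        simp only [hbid, if_pos (⟨y, hy⟩ : ∃ i, A i = some k₀)]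
      have hsum : ∑ k : Fin n, (N - pr' k) = (∑ k : Fin n, (N - pr k)) - 1 := by
        rw [hpr']
        rw [show (fun k => N - Function.update pr k₀ (bid k₀) k) = Function.update (fun k => N - pr k) k₀ (N - bid k₀) by
          funext k
          rcases eq_or_ne k k₀ with h | h
          · rw [h]; simp
          · rw [Function.update_of_ne h, Function.update_of_ne h]]
        rw [Finset.sum_update_of_mem (Finset.mem_univ k₀)]
        rw [← Finset.add_sum_erase Finset.univ (fun k => N - pr k) (Finset.mem_univ k₀)]
        have : Finset.univ \ {k₀} = Finset.univ.erase k₀ := by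
          ext x; simp [Finset.mem_sdiff, Finset.mem_erase, and_comm]
        rw [this, hbidval]
        omega
      have hsumge : 1 ≤ ∑ k : Fin n, (N - pr k) := by
        calc 1 ≤ N - pr k₀ := by omega
        _ ≤ _ := Finset.single_le_sum (f := fun k => N - pr k) (fun k _ => Nat.zero_le _) (Finset.mem_univ k₀)
      have hcard : (Finset.univ.filter (fun i => A' i = none)).card ≤
          (Finset.univ.filter (fun i => A i = none)).card + 1 := by
        have hsub : Finset.univ.filter (fun i => A' i = none) ⊆
            insert y (Finset.univ.filter (fun i => A i = none)) := by
          intro i hi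
          simp only [Finset.mem_filter, Finset.mem_univ, true_and] at hi
          rcases eq_or_ne i z with hiz | hiz
          · rw [hiz, hA'z] at hi; exact nomatch hi
          · by_cases hik : A i = some k₀
            · have : i = y := S.inj i y k₀ hik hy
              rw [this]; exact Finset.mem_insert_self _ _
            · rw [hA'ne i hiz hik] at hi
              apply Finset.mem_insert_of_mem
              simp only [Finset.mem_filter, Finset.mem_univ, true_and]; exact hi
        calc _ ≤ (insert y (Finset.univ.filter (fun i => A i = none))).card := Finset.card_le_card hsub
        _ ≤ _ := Finset.card_insert_le _ _
      rw [hsum]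
      have hmul : ((∑ k : Fin n, (N - pr k)) - 1) * n = (∑ k : Fin n, (N - pr k)) * n - n :=
        Nat.sub_mul _ _ _ ▸ by rw [one_mul]
      have hnle : n ≤ (∑ k : Fin n, (N - pr k)) * n := by
        calc n = 1 * n := (one_mul n).symm
        _ ≤ _ := Nat.mul_le_mul_right n hsumge
      omega
    · -- fresh claim: prices unchanged, one fewer unassigned agent
      have hbidval : bid k₀ = pr k₀ := by simp only [hbid, if_neg hheld]
      have hpreq : pr' = pr := by
        rw [hpr', hbidval]
        exact Function.update_eq_self _ _
      have hcard : Finset.univ.filter (fun i => A' i = none) =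
          (Finset.univ.filter (fun i => A i = none)).erase z := by
        ext i
        simp only [Finset.mem_filter, Finset.mem_univ, true_and, Finset.mem_erase]
        constructor
        · intro hi
          rcases eq_or_ne i z with hiz | hiz
          · rw [hiz, hA'z] at hi; exact nomatch hi
          · by_cases hik : A i = some k₀
            · exact absurd hik (fun h => hheld ⟨i, h⟩)
            · rw [hA'ne i hiz hik] at hi
              exact ⟨hiz, hi⟩
        · rintro ⟨hiz, hi⟩
          by_cases hik : A i = some k₀
          · exact absurd hik (fun h => hheld ⟨i, h⟩)
          · rw [hA'ne i hiz hik]; exact hi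
      rw [hpreq, hcard]
      have hzmem : z ∈ Finset.univ.filter (fun i => A i = none) := by
        simp only [Finset.mem_filter, Finset.mem_univ, true_and]; exact hz
      have h1 := Finset.card_erase_of_mem hzmem
      have h2 : 0 < (Finset.univ.filter (fun i => A i = none)).card := Finset.card_pos.mpr ⟨z, hzmem⟩
      omega


lemma auc_terminal (hn : 2 ≤ n)
    (hV1 : ∀ i k, Antitone (V i k)) (hV2 : ∀ i k, V i k N = 0) (hV3 : ∀ i k p, 0 ≤ V i k p)
    (hV4 : ∀ k l p, V c l p ≤ V c k 0) :
    ∀ (m : ℕ) (A : Fin n → Option (Fin n)) (pr : Fin n → ℕ),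
      aucPhi N A pr ≤ m → AucValid N V c A pr →
      ∃ A' pr', AucValid N V c A' pr' ∧ ∀ i, ∃ k, A' i = some k := by
  intro m
  induction m with
  | zero =>
    intro A pr hphi hS
    by_cases hall : ∀ i, ∃ k, A i = some k
    · exact ⟨A, pr, hS, hall⟩
    · push_neg at hall
      obtain ⟨i, hi⟩ := hall
      have hinone : A i = none := by
        rcases Option.eq_none_or_eq_some (A i) with h | ⟨k, h⟩
        · exact h
        · exact absurd h (hi k)
      have hstep : ∃ A' pr', AucValid N V c A' pr' ∧ aucPhi N A' pr' < aucPhi N A pr := by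
        by_cases hc : A c = none
        · exact auc_step_cutter N V c A pr hV4 hS hc
        · exact auc_step_noncutter N V c hn A pr hV1 hV2 hV3 hS hc hinone
      obtain ⟨A', pr', _, hlt⟩ := hstep
      omega
  | succ m ih =>
    intro A pr hphi hS
    by_cases hall : ∀ i, ∃ k, A i = some k
    · exact ⟨A, pr, hS, hall⟩
    · push_neg at hall
      obtain ⟨i, hi⟩ := hall
      have hinone : A i = none := by
        rcases Option.eq_none_or_eq_some (A i) with h | ⟨k, h⟩
        · exact h
        · exact absurd h (hi k)
      have hstep : ∃ A' pr', AucValid N V c A' pr' ∧ aucPhi N A' pr' < aucPhi N A pr := by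
        by_cases hc : A c = none
        · exact auc_step_cutter N V c A pr hV4 hS hc
        · exact auc_step_noncutter N V c hn A pr hV1 hV2 hV3 hS hc hinone
      obtain ⟨A', pr', hS', hlt⟩ := hstep
      exact ih A' pr' (by omega) hS'

/-- The main auction result. -/
theorem auc_main (hn : 2 ≤ n)
    (hV1 : ∀ i k, Antitone (V i k)) (hV2 : ∀ i k, V i k N = 0) (hV3 : ∀ i k p, 0 ≤ V i k p)
    (hV4 : ∀ k l p, V c l p ≤ V c k 0) :
    ∃ (π : Fin n → Fin n) (p : Fin n → ℕ), Function.Injective π ∧ (∀ k, p k ≤ N) ∧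
      (∀ i l, V i l (p l + 1) ≤ V i (π i) (p (π i))) ∧ p (π c) = 0 ∧
      ∃ w, w ≠ c ∧ p (π w) ≤ 1 := by
  classical
  have hnpos : 0 < n := by omega
  set A₀ : Fin n → Option (Fin n) := fun i => if i = c then some ⟨0, hnpos⟩ else none with hA₀
  have hS₀ : AucValid N V c A₀ (fun _ => 0) := by
    constructor
    · intro i j k hi hj
      by_cases hic : i = c
      · by_cases hjc : j = c
        · rw [hic, hjc]
        · simp only [hA₀, if_neg hjc] at hj; exact nomatch hj
      · simp only [hA₀, if_neg hic] at hi; exact nomatch hi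
    · intro k; exact Nat.zero_le N
    · intro k _; rfl
    · intro i k hi l
      by_cases hic : i = c
      · subst hic
        simp only [hA₀, if_pos rfl, Option.some_inj] at hi
        subst hi
        exact hV4 _ l 1
      · simp only [hA₀, if_neg hic] at hi; exact nomatch hi
    · intro k hk
      rfl
    · intro h
      simp only [hA₀, if_pos rfl] at h
      exact nomatch h
    · intro hall
      exfalso
      -- there is an agent other than c, who is unassigned initially
      have : ∃ i : Fin n, i ≠ c := by
        rcases eq_or_ne c ⟨0, hnpos⟩ with h | h
        · refine ⟨⟨1, by omega⟩, ?_⟩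
          rw [h]
          intro hh
          have := congrArg Fin.val hh
          simp at this
        · exact ⟨⟨0, hnpos⟩, Ne.symm h⟩
      obtain ⟨i, hic⟩ := this
      obtain ⟨k, hk⟩ := hall i
      simp only [hA₀, if_neg hic] at hk
      exact nomatch hk
  obtain ⟨A', pr', hS', hall⟩ :=
    auc_terminal N V c hn hV1 hV2 hV3 hV4 (aucPhi N A₀ (fun _ => 0)) A₀ _ le_rfl hS₀
  choose π hπ using hall
  refine ⟨π, pr', ?_, hS'.prle, ?_, ?_, ?_⟩
  · intro i j hij
    exact hS'.inj i j (π j) (hij ▸ hπ i) (hπ j)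
  · intro i l
    exact hS'.ef i (π i) (hπ i) l
  · exact hS'.cut0 (π c) (hπ c)
  · obtain ⟨w, k, hwc, hwk, hpk⟩ := hS'.fin1 (fun i => ⟨π i, hπ i⟩)
    refine ⟨w, hwc, ?_⟩
    have : π w = k := by
      have := hπ w
      rw [hwk] at this
      exact (Option.some_inj.mp this).symm
    rw [this]
    exact hpk


end Auction

/- ============ pigeonhole along an ultrafilter ============ -/
lemma ultra_pigeon {α β : Type*} [Finite β] (U : Ultrafilter α) (g : α → β) :
    ∃ b, ∀ᶠ a in U, g a = b := by
  by_contra h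
  push_neg at h
  have h2 : ∀ b : β, {a | g a ≠ b} ∈ U := by
    intro b
    have h3 : {a | g a = b} ∉ U := Ultrafilter.compl_mem_iff_notMem.mp (h b)
    exact Ultrafilter.compl_mem_iff_notMem.mpr h3
  have h4 : (⋂ b : β, {a | g a ≠ b}) ∈ U := Filter.iInter_mem.mpr h2
  have h5 : (⋂ b : β, {a : α | g a ≠ b}) = ∅ := by
    ext a
    simp only [mem_iInter, mem_setOf_eq, mem_empty_iff_false, iff_false, not_forall, not_not]
    exact ⟨g a, rfl⟩
  rw [h5] at h4
  exact Filter.empty_notMem (U : Filter α) h4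

/- ============ main theorem ============ -/
/-- Existence content of the Core Protocol: agent `⟨0,_⟩` (the cutter) cuts the cake
into `n` pieces he values `1/n` each, via cut points `t 0 = 0 ≤ t 1 ≤ ⋯ ≤ t n = 1`;
there are an injective assignment `σ` of agents to pieces and points
`s i ∈ [t (σ i), t (σ i + 1)]` such that the partial allocation giving agent `i` the
suffix `[s i, t (σ i + 1)]` of piece `σ i` is envy-free, the cutter gets a complete
piece, and at least one non-cutter agent gets a complete piece. -/
theorem core_protocol_exists
    (n : ℕ) (hn : 2 ≤ n)
    (μ : Fin n → Measure ℝ)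
    (hprob : ∀ i, IsProbabilityMeasure (μ i))
    (hsupp : ∀ i, μ i (Set.Icc (0:ℝ) 1) = 1)
    (hna : ∀ i, NoAtoms (μ i)) :
    ∃ (t : Fin (n + 1) → ℝ) (σ : Fin n → Fin n) (s : Fin n → ℝ),
      t 0 = 0 ∧ t (Fin.last n) = 1 ∧ Monotone t ∧
      (∀ k : Fin n,
        μ ⟨0, by omega⟩ (Set.Icc (t k.castSucc) (t k.succ)) = (n : ℝ≥0∞)⁻¹) ∧
      Function.Injective σ ∧
      (∀ i, t (σ i).castSucc ≤ s i ∧ s i ≤ t (σ i).succ) ∧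
      (∀ i j, μ i (Set.Icc (s j) (t (σ j).succ)) ≤ μ i (Set.Icc (s i) (t (σ i).succ))) ∧
      s ⟨0, by omega⟩ = t (σ ⟨0, by omega⟩).castSucc ∧
      (∃ i : Fin n, i ≠ ⟨0, by omega⟩ ∧ s i = t (σ i).castSucc) := by
  classical
  haveI := fun i => hprob i
  haveI : ∀ i, NullSingletonClass (μ i) := fun i => hna i
  have hn1 : 1 ≤ n := by omega
  have hnpos : (0:ℝ) < n := by exact_mod_cast hn1
  set c : Fin n := ⟨0, by omega⟩ with hcdef
  obtain ⟨T, hT0, hTge, hTmono, hTmem, hTval⟩ := exists_cuts (μ c) n hn1 (hsupp c)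
  set F : Fin n → ℝ → ℝ := fun i => cdfR (μ i) with hFdef
  have hFmono : ∀ i, Monotone (F i) := fun i => cdfR_mono (μ i)
  have hFcont : ∀ i, Continuous (F i) := fun i => cdfR_continuous (μ i)
  set a : Fin n → ℝ := fun k => T k.val with hadef
  set b : Fin n → ℝ := fun k => T (k.val + 1) with hbdef
  have hab : ∀ k, a k ≤ b k := fun k => hTmono (Nat.le_succ _)
  have ha01 : ∀ k, a k ∈ Icc (0:ℝ) 1 := fun k => hTmem k.val
  have hb01 : ∀ k, b k ∈ Icc (0:ℝ) 1 := fun k => hTmem (k.val + 1)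
  have hba1 : ∀ k, b k - a k ≤ 1 := by
    intro k; have h1 := (ha01 k).1; have h2 := (hb01 k).2; linarith
  have hFba : ∀ k : Fin n, F c (b k) - F c (a k) = 1 / n := by
    intro k
    have hklt : k.val < n := k.isLt
    have h1 : F c (a k) = k.val / n := hTval k.val (by omega)
    have h2 : F c (b k) = (k.val + 1 : ℕ) / n := hTval (k.val + 1) (by omega)
    rw [h1, h2]
    push_cast
    ring
  -- the grids
  set pos : ℕ → Fin n → ℕ → ℝ :=
    fun m k p => a k + (min p (m+1) : ℕ) * (b k - a k) / (m+1) with hposdef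
  have hpos0 : ∀ m k, pos m k 0 = a k := by
    intro m k
    have h0 : min 0 (m+1) = 0 := min_eq_left (Nat.zero_le _)
    simp only [hposdef, h0, Nat.cast_zero, zero_mul, zero_div, add_zero]
  have hposmono : ∀ m k, Monotone (pos m k) := by
    intro m k p q hpq
    simp only [hposdef]
    have h1 : (min p (m+1) : ℕ) ≤ (min q (m+1) : ℕ) := by omega
    have h2 : ((min p (m+1) : ℕ) : ℝ) ≤ ((min q (m+1) : ℕ) : ℝ) := by exact_mod_cast h1
    have h3 : (0:ℝ) ≤ b k - a k := by linarith [hab k]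
    have h4 : (0:ℝ) < (m:ℝ)+1 := by positivity
    gcongr
  have hposmem : ∀ m k p, pos m k p ∈ Icc (a k) (b k) := by
    intro m k p
    have h3 : (0:ℝ) ≤ b k - a k := by linarith [hab k]
    have h4 : (0:ℝ) < (m:ℝ)+1 := by positivity
    constructor
    · simp only [hposdef]
      have : (0:ℝ) ≤ (min p (m+1) : ℕ) * (b k - a k) / (m+1) := by positivity
      linarith
    · simp only [hposdef]
      have h5 : ((min p (m+1) : ℕ) : ℝ) ≤ (m:ℝ)+1 := by
        have : (min p (m+1) : ℕ) ≤ m+1 := min_le_right _ _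
        exact_mod_cast this
      have h6 : ((min p (m+1):ℕ):ℝ) * (b k - a k) / (m+1) ≤ ((m:ℝ)+1) * (b k - a k) / (m+1) := by
        gcongr
      have h7 : ((m:ℝ)+1) * (b k - a k) / (m+1) = b k - a k := by field_simp
      rw [h7] at h6
      linarith
  have hposN : ∀ m k, pos m k (m+1) = b k := by
    intro m k
    simp only [hposdef, min_self]
    have h4 : (0:ℝ) < (m:ℝ)+1 := by positivity
    have : ((m+1 : ℕ):ℝ) = (m:ℝ)+1 := by push_cast; ring
    rw [this]
    field_simp
    ring
  have hposstep : ∀ m k p, pos m k (p+1) ≤ pos m k p + 1/(m+1) := by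
    intro m k p
    simp only [hposdef]
    have h3 : (0:ℝ) ≤ b k - a k := by linarith [hab k]
    have h4 : (0:ℝ) < (m:ℝ)+1 := by positivity
    have h1 : (min (p+1) (m+1) : ℕ) ≤ min p (m+1) + 1 := by omega
    have h2 : ((min (p+1) (m+1) : ℕ):ℝ) ≤ ((min p (m+1):ℕ):ℝ) + 1 := by exact_mod_cast h1
    have h5 : ((min (p+1) (m+1) : ℕ):ℝ) * (b k - a k) / (m+1)
        ≤ (((min p (m+1):ℕ):ℝ) + 1) * (b k - a k) / (m+1) := by gcongr
    have h6 : (((min p (m+1):ℕ):ℝ) + 1) * (b k - a k) / (m+1)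
        = ((min p (m+1):ℕ):ℝ) * (b k - a k) / (m+1) + (b k - a k)/(m+1) := by ring
    have h7 : (b k - a k)/((m:ℝ)+1) ≤ 1/((m:ℝ)+1) := by
      gcongr
      exact hba1 k
    linarith
  -- the valuation functions on the grid
  set Vf : ℕ → Fin n → Fin n → ℕ → ℝ :=
    fun m i k p => F i (b k) - F i (pos m k p) with hVdef
  have hauc : ∀ m : ℕ, ∃ (π : Fin n → Fin n) (p : Fin n → ℕ),
      Function.Injective π ∧ (∀ k, p k ≤ m+1) ∧
      (∀ i l, Vf m i l (p l + 1) ≤ Vf m i (π i) (p (π i))) ∧ p (π c) = 0 ∧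
      ∃ w, w ≠ c ∧ p (π w) ≤ 1 := by
    intro m
    apply auc_main (m+1) (Vf m) c hn
    · intro i k p q hpq
      simp only [hVdef]
      have := hFmono i (hposmono m k hpq)
      linarith
    · intro i k
      simp only [hVdef, hposN m k]
      ring
    · intro i k p
      simp only [hVdef]
      have := hFmono i (hposmem m k p).2
      linarith
    · intro k l p
      simp only [hVdef]
      have h1 : F c (b l) - F c (pos m l p) ≤ F c (b l) - F c (a l) := by
        have := hFmono c (hposmem m l p).1
        linarith
      rw [hpos0 m k]
      calc F c (b l) - F c (pos m l p) ≤ F c (b l) - F c (a l) := h1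
      _ = 1/n := hFba l
      _ = F c (b k) - F c (a k) := (hFba k).symm
  choose π p hπinj hple hef hcut0 hw using hauc
  choose w hwc hwle using hw
  -- pass to the ultrafilter limit
  set U : Ultrafilter ℕ := Ultrafilter.of atTop with hUdef
  have hUle : (U : Filter ℕ) ≤ atTop := Ultrafilter.of_le _
  obtain ⟨⟨σ, w₀⟩, hpig⟩ := ultra_pigeon U (fun m => (π m, w m))
  have hEσ : ∀ᶠ m in U, π m = σ := by
    filter_upwards [hpig] with m hm
    exact congrArg Prod.fst hm
  have hEw : ∀ᶠ m in U, w m = w₀ := by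
    filter_upwards [hpig] with m hm
    exact congrArg Prod.snd hm
  set sfun : Fin n → ℕ → ℝ := fun i m => pos m (π m i) (p m (π m i)) with hsfdef
  have hsmem : ∀ i m, sfun i m ∈ Icc (0:ℝ) 1 := by
    intro i m
    have h1 := hposmem m (π m i) (p m (π m i))
    exact ⟨le_trans (ha01 _).1 h1.1, le_trans h1.2 (hb01 _).2⟩
  have hxex : ∀ i : Fin n, ∃ x, Tendsto (sfun i) (U : Filter ℕ) (𝓝 x) := by
    intro i
    have hmem : (U.map (sfun i) : Filter ℝ) ≤ Filter.principal (Icc (0:ℝ) 1) := by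
      rw [Ultrafilter.coe_map]
      rw [Filter.le_principal_iff, Filter.mem_map]
      apply Filter.univ_mem'
      intro m
      exact hsmem i m
    obtain ⟨x, _, hx⟩ := (isCompact_Icc (a := (0:ℝ)) (b := 1)).ultrafilter_le_nhds
      (U.map (sfun i)) hmem
    refine ⟨x, ?_⟩
    rwa [Filter.Tendsto, ← Ultrafilter.coe_map]
  choose s hs using hxex
  -- s i lies in the piece σ i
  have hsicc : ∀ i, s i ∈ Icc (a (σ i)) (b (σ i)) := by
    intro i
    apply IsClosed.mem_of_tendsto isClosed_Icc (hs i)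
    filter_upwards [hEσ] with m hm
    rw [hsfdef]
    simp only
    rw [hm]
    exact hposmem m (σ i) _
  -- the cutter's piece is complete
  have hscutter : s c = a (σ c) := by
    have h1 : Tendsto (sfun c) (U : Filter ℕ) (𝓝 (a (σ c))) := by
      apply Filter.Tendsto.congr' _ tendsto_const_nhds
      filter_upwards [hEσ] with m hm
      have h2 : sfun c m = a (σ c) := by
        show pos m (π m c) (p m (π m c)) = a (σ c)
        rw [hcut0 m, hpos0, hm]
      exact h2.symm
    exact tendsto_nhds_unique (hs c) h1
  -- the piece of the special non-cutter is complete
  have honedivU : Tendsto (fun m : ℕ => 1/((m:ℝ)+1)) (U : Filter ℕ) (𝓝 0) :=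
    tendsto_one_div_add_atTop_nhds_zero_nat.mono_left hUle
  have hsw : s w₀ = a (σ w₀) := by
    have h2 : Tendsto (sfun w₀) (U : Filter ℕ) (𝓝 (a (σ w₀))) := by
      apply tendsto_of_tendsto_of_tendsto_of_le_of_le' (g := fun _ : ℕ => a (σ w₀))
        (h := fun m : ℕ => a (σ w₀) + 1/((m:ℝ)+1)) tendsto_const_nhds
      · have h3 := (tendsto_const_nhds (x := a (σ w₀)) (f := (U : Filter ℕ))).add honedivU
        rwa [add_zero] at h3
      · filter_upwards [hEσ] with m hm
        have e1 : sfun w₀ m = pos m (σ w₀) (p m (σ w₀)) := by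
          show pos m (π m w₀) (p m (π m w₀)) = _
          rw [hm]
        rw [e1]
        exact (hposmem m (σ w₀) _).1
      · filter_upwards [hEσ, hEw] with m hm hwm
        have e1 : sfun w₀ m = pos m (σ w₀) (p m (σ w₀)) := by
          show pos m (π m w₀) (p m (π m w₀)) = _
          rw [hm]
        have hq : p m (σ w₀) ≤ 1 := by
          have h5 := hwle m
          rwa [hwm, hm] at h5
        rw [e1]
        calc pos m (σ w₀) (p m (σ w₀)) ≤ pos m (σ w₀) 1 := hposmono m (σ w₀) hq
        _ ≤ pos m (σ w₀) 0 + 1/((m:ℝ)+1) := hposstep m (σ w₀) 0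
        _ = a (σ w₀) + 1/((m:ℝ)+1) := by rw [hpos0]
    exact tendsto_nhds_unique (hs w₀) h2
  -- the limit envy-freeness, in CDF form
  have hEF : ∀ i j : Fin n, F i (b (σ j)) - F i (s j) ≤ F i (b (σ i)) - F i (s i) := by
    intro i j
    have hyt : Tendsto (fun m => pos m (σ j) (p m (σ j) + 1)) (U : Filter ℕ) (𝓝 (s j)) := by
      apply tendsto_of_tendsto_of_tendsto_of_le_of_le' (g := sfun j)
        (h := fun m : ℕ => sfun j m + 1/((m:ℝ)+1)) (hs j)
      · have h3 := (hs j).add honedivU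
        rwa [add_zero] at h3
      · filter_upwards [hEσ] with m hm
        have e1 : sfun j m = pos m (σ j) (p m (σ j)) := by
          show pos m (π m j) (p m (π m j)) = _
          rw [hm]
        rw [e1]
        exact hposmono m (σ j) (Nat.le_succ _)
      · filter_upwards [hEσ] with m hm
        have e1 : sfun j m = pos m (σ j) (p m (σ j)) := by
          show pos m (π m j) (p m (π m j)) = _
          rw [hm]
        rw [e1]
        exact hposstep m (σ j) (p m (σ j))
    have hLHS : Tendsto (fun m => F i (b (σ j)) - F i (pos m (σ j) (p m (σ j) + 1)))
        (U : Filter ℕ) (𝓝 (F i (b (σ j)) - F i (s j))) :=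
      tendsto_const_nhds.sub (((hFcont i).tendsto (s j)).comp hyt)
    have hRHS : Tendsto (fun m => F i (b (σ i)) - F i (sfun i m))
        (U : Filter ℕ) (𝓝 (F i (b (σ i)) - F i (s i))) :=
      tendsto_const_nhds.sub (((hFcont i).tendsto (s i)).comp (hs i))
    apply le_of_tendsto_of_tendsto hLHS hRHS
    filter_upwards [hEσ] with m hm
    have e2 : sfun i m = pos m (σ i) (p m (σ i)) := by
      show pos m (π m i) (p m (π m i)) = _
      rw [hm]
    have h3 := hef m i (σ j)
    rw [hm] at h3
    show F i (b (σ j)) - F i (pos m (σ j) (p m (σ j) + 1)) ≤ F i (b (σ i)) - F i (sfun i m)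
    rw [e2]
    exact h3
  -- now assemble the conclusion
  refine ⟨fun k : Fin (n+1) => T k.val, σ, s, ?_, ?_, ?_, ?_, ?_, ?_, ?_, ?_, ?_⟩
  · show T ((0 : Fin (n+1)) : ℕ) = 0
    rw [Fin.val_zero]
    exact hT0
  · show T ((Fin.last n : Fin (n+1)) : ℕ) = 1
    rw [Fin.val_last]
    exact hTge n le_rfl
  · intro k l hkl
    exact hTmono hkl
  · intro k
    show μ c (Icc (T k.castSucc.val) (T k.succ.val)) = (n : ℝ≥0∞)⁻¹
    have hcs : (k.castSucc : ℕ) = (k : ℕ) := Fin.coe_castSucc k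
    have hsc : (k.succ : ℕ) = (k : ℕ) + 1 := Fin.val_succ k
    rw [hcs, hsc]
    haveI := hprob c
    haveI : NullSingletonClass (μ c) := hna c
    have h1 : (μ c (Icc (a k) (b k))).toReal = 1/(n:ℝ) := by
      rw [measure_Icc_toReal (μ c) (hab k)]
      exact hFba k
    have h2 : μ c (Icc (a k) (b k)) = ENNReal.ofReal (1/(n:ℝ)) := by
      rw [← h1, ENNReal.ofReal_toReal (measure_ne_top _ _)]
    have h3 : ENNReal.ofReal (1/(n:ℝ)) = (n : ℝ≥0∞)⁻¹ := by
      rw [one_div, ENNReal.ofReal_inv_of_pos hnpos, ENNReal.ofReal_natCast]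
    show μ c (Icc (a k) (b k)) = (n : ℝ≥0∞)⁻¹
    rw [h2, h3]
  · obtain ⟨m, hm⟩ := hEσ.exists
    rw [← hm]
    exact hπinj m
  · intro i
    exact ⟨(hsicc i).1, (hsicc i).2⟩
  · intro i j
    haveI := hprob i
    haveI : NullSingletonClass (μ i) := hna i
    have hsjb : s j ≤ b (σ j) := (hsicc j).2
    have hsib : s i ≤ b (σ i) := (hsicc i).2
    have h1 : (μ i (Icc (s j) (b (σ j)))).toReal ≤ (μ i (Icc (s i) (b (σ i)))).toReal := by
      rw [measure_Icc_toReal (μ i) hsjb, measure_Icc_toReal (μ i) hsib]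
      exact hEF i j
    exact (ENNReal.toReal_le_toReal (measure_ne_top _ _) (measure_ne_top _ _)).mp h1
  · exact hscutter
  · refine ⟨w₀, ?_, hsw⟩
    obtain ⟨m, hm⟩ := hEw.exists
    rw [← hm]
    exact hwc m
end

section
/- Let E be a relation (directed graph) on a finite vertex set V, let T ⊆ V be nonempty, and write T' = V \ T. Suppose (i) every vertex of V has at least one in-neighbor, and (ii) every vertex of V has an edge to every vertex of T'. Then there exists a directed cycle containing at least one vertex of T: there are k ≥ 1 and vertices v_0, v_1, …, v_k with v_0 = v_k ∈ T and an edge from v_m to v_{m+1} for every m < k. (This is the claim that the permutation graph in the GoLeft Protocol always contains a cycle through a node of T.) -/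
/-- GoLeft Protocol cycle claim: if every vertex of a finite directed graph has an
in-neighbor, and every vertex has an edge to every vertex outside the nonempty set
`T`, then there is a directed cycle through some vertex of `T`. -/
theorem cycle_through_T_exists
    (V : Type*) [Fintype V]
    (E : V → V → Prop) (T : Set V) (hT : T.Nonempty)
    (hdeg : ∀ w : V, ∃ u : V, E u w)
    (hT' : ∀ u w : V, w ∉ T → E u w) :
    ∃ (k : ℕ) (f : ℕ → V),
      1 ≤ k ∧ f 0 = f k ∧ f 0 ∈ T ∧ ∀ m < k, E (f m) (f (m + 1)) := by
  obtain ⟨t, ht⟩ := hT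
  -- backward walk from t
  let g : ℕ → V := fun n => Nat.rec t (fun _ v => (hdeg v).choose) n
  have hg0 : g 0 = t := rfl
  have hgE : ∀ n, E (g (n + 1)) (g n) := fun n => (hdeg (g n)).choose_spec
  by_cases hall : ∃ i, g i ∉ T
  · -- some vertex of the walk is outside T: close a cycle through t via hT'
    obtain ⟨i, hi⟩ := hall
    refine ⟨i + 1, fun m => if m = 0 then t else g (i + 1 - m), by omega, ?_, by simpa, ?_⟩
    · simp only [if_pos rfl, if_neg (Nat.succ_ne_zero i)]
      simpa using hg0.symm
    · intro m hm
      rcases Nat.eq_zero_or_pos m with rfl | hmpos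
      · simp only [if_pos rfl, if_neg (Nat.succ_ne_zero 0)]
        simpa using hT' t (g i) hi
      · have h1 : m ≠ 0 := hmpos.ne'
        have h2 : m + 1 ≠ 0 := by omega
        simp only [if_neg h1, if_neg h2]
        have : i + 1 - m = (i + 1 - (m + 1)) + 1 := by omega
        rw [this]
        exact hgE _
  · push_neg at hall
    -- all walk vertices in T; pigeonhole gives a repeat, yielding a cycle in T
    obtain ⟨i, j, hne, heq⟩ := Finite.exists_ne_map_eq_of_infinite g
    wlog hij : i < j generalizing i j
    · exact this j i hne.symm heq.symm (by omega)
    refine ⟨j - i, fun m => g (j - m), by omega, ?_, hall j, ?_⟩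
    · show g (j - 0) = g (j - (j - i))
      have : j - (j - i) = i := by omega
      rw [this, Nat.sub_zero]; exact heq.symm
    · intro m hm
      show E (g (j - m)) (g (j - (m + 1)))
      have : j - m = (j - (m + 1)) + 1 := by omega
      rw [this]
      exact hgE _
end

section
/- A significant advantage becomes dominance in a bounded number of Core iterations: for every natural number n ≥ 3, one has ((n−2)/n)^(n²) < 1/(n−2) (as real numbers). Hence if the cutter's bonus over some agent is at least a 1/(n−2) fraction of his value of the residue, then after n² further iterations of the Core Protocol with the same cutter — each of which multiplies the cutter's value of the residue by at most (n−2)/n — the cutter's value of the residue drops below his bonus, so the cutter dominates that agent. -/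
/-- A significant advantage becomes dominance in a bounded number of Core iterations:
for `n ≥ 3`, `((n−2)/n)^(n²) < 1/(n−2)`. -/
theorem significant_advantage_becomes_dominance
    (n : ℕ) (hn : 3 ≤ n) :
    (((n : ℝ) - 2) / n) ^ (n ^ 2) < 1 / ((n : ℝ) - 2) := by
  have hn3 : (3 : ℝ) ≤ (n : ℝ) := by exact_mod_cast hn
  have hnpos : (0 : ℝ) < n := by linarith
  have hsub : (0 : ℝ) < (n : ℝ) - 2 := by linarith
  have ha : (0 : ℝ) ≤ ((n : ℝ) - 2) / n := by positivity
  -- step 1: (n-2)/n ≤ exp(-2/n)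
  have h1 : ((n : ℝ) - 2) / n ≤ Real.exp (-2 / n) := by
    have := Real.add_one_le_exp (-2 / n)
    have heq : ((n : ℝ) - 2) / n = -2 / n + 1 := by field_simp; ring
    linarith
  have h2 : (((n : ℝ) - 2) / n) ^ (n ^ 2) ≤ Real.exp (-2 / n) ^ (n ^ 2) :=
    pow_le_pow_left₀ ha h1 _
  have h3 : Real.exp (-2 / n) ^ (n ^ 2) = Real.exp (-(2 * n)) := by
    rw [← Real.exp_nat_mul]
    congr 1
    have hne : (n : ℝ) ≠ 0 := ne_of_gt hnpos
    push_cast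
    field_simp
  have h4 : Real.exp (-(2 * (n : ℝ))) < 1 / ((n : ℝ) - 2) := by
    rw [Real.exp_neg]
    rw [one_div, inv_lt_inv₀ (Real.exp_pos _) hsub]
    have := Real.add_one_le_exp (2 * (n : ℝ))
    linarith
  calc (((n : ℝ) - 2) / n) ^ (n ^ 2) ≤ Real.exp (-(2 * n)) := by rw [← h3]; exact h2
    _ < 1 / ((n : ℝ) - 2) := h4
end
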